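/- arXiv:1603.08460 — 4 statements merged into one kernel-verified Lean document; each statement's English description precedes it below -/
import Mathlib

section
/- Let X be uniformly distributed on the half-ball B_u(x,r) = B(x,r) ∩ {z ∈ ℝ^d : ⟨z − x, u⟩ ≥ 0}, where u is a unit vector. Then E[⟨X − x, u⟩/r] = Γ((d+2)/2)/(√π · Γ((d+3)/2)). -/
open MeasureTheory Metric
open scoped ENNReal RealInnerProductSpace

lemma ftc_pow (n : ℕ) (r : ℝ) (hr : 0 < r) :
    ∫ t in (0:ℝ)..r, t * (r^2 - t^2) ^ ((n:ℝ)/2) = r^(n+2) / (n+2) := by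
  have hp : (1:ℝ) ≤ (n:ℝ)/2 + 1 := by
    have h : (0:ℝ) ≤ (n:ℝ) := n.cast_nonneg
    linarith
  have key : ∀ t ∈ Set.uIcc (0:ℝ) r,
      HasDerivAt (fun t => -((r^2 - t^2) ^ ((n:ℝ)/2 + 1)) / (n+2))
        (t * (r^2 - t^2) ^ ((n:ℝ)/2)) t := by
    intro t _
    have h1 : HasDerivAt (fun t : ℝ => r^2 - t^2) (-(2*t)) t := by
      simpa using (hasDerivAt_pow 2 t).const_sub (r^2)
    have h2 : HasDerivAt (fun s : ℝ => s ^ ((n:ℝ)/2 + 1))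
        (((n:ℝ)/2 + 1) * (r^2 - t^2) ^ ((n:ℝ)/2 + 1 - 1)) (r^2 - t^2) :=
      Real.hasDerivAt_rpow_const (Or.inr hp)
    have h3 := (h2.comp t h1).neg.div_const ((n:ℝ)+2)
    refine HasDerivAt.congr_deriv h3 ?_
    have hn2 : ((n:ℝ)+2) ≠ 0 := by positivity
    rw [show (n:ℝ)/2 + 1 - 1 = (n:ℝ)/2 by ring]
    field_simp
  have hcont : ContinuousOn (fun t : ℝ => t * (r^2 - t^2) ^ ((n:ℝ)/2)) (Set.uIcc 0 r) := by
    apply Continuous.continuousOn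
    exact continuous_id.mul (Real.continuous_rpow_const (by positivity) |>.comp
      (continuous_const.sub (continuous_pow 2)))
  rw [intervalIntegral.integral_eq_sub_of_hasDerivAt key (hcont.intervalIntegrable)]
  have h0 : (r^2 - r^2 : ℝ) = 0 := by ring
  rw [h0, Real.zero_rpow (by positivity)]
  have : (r^2 - 0^2 : ℝ) = r^2 := by ring
  rw [this]
  have : (r^2 : ℝ) ^ ((n:ℝ)/2 + 1) = r ^ (n+2) := by
    rw [← Real.rpow_natCast r 2, ← Real.rpow_mul hr.le, ← Real.rpow_natCast r (n+2)]
    norm_num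
    ring_nf
  rw [this]
  ring

lemma vol_sum_sq_le (n : ℕ) (s : ℝ) (hs : 0 ≤ s) :
    volume {y : Fin n → ℝ | ∑ j, y j ^ 2 ≤ s} =
      ENNReal.ofReal (s ^ ((n:ℝ)/2) * (Real.sqrt Real.pi ^ n / Real.Gamma ((n:ℝ)/2 + 1))) := by
  have hmeas : MeasurableSet {y : Fin n → ℝ | ∑ j, y j ^ 2 ≤ s} := by
    apply measurableSet_le _ measurable_const
    exact Finset.measurable_sum _ fun j _ => (measurable_pi_apply j).pow_const 2
  rcases Nat.eq_zero_or_pos n with hn | hn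
  · subst hn
    have h1 : {y : Fin 0 → ℝ | ∑ j, y j ^ 2 ≤ s} = Set.univ := by
      ext y; simp [hs]
    rw [h1]
    rw [volume_pi, Measure.pi_of_empty]
    simp [Real.Gamma_one]
  · haveI : Nonempty (Fin n) := ⟨⟨0, hn⟩⟩
    rw [← (EuclideanSpace.volume_preserving_symm_measurableEquiv_toLp (Fin n)).measure_preimage
      hmeas.nullMeasurableSet]
    have h2 : (MeasurableEquiv.toLp 2 (Fin n → ℝ)).symm ⁻¹' {y : Fin n → ℝ | ∑ j, y j ^ 2 ≤ s} =
        closedBall (0 : EuclideanSpace ℝ (Fin n)) (Real.sqrt s) := by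
      ext w
      simp only [Set.mem_preimage, Set.mem_setOf_eq, mem_closedBall_zero_iff]
      have hco : ∀ j, (MeasurableEquiv.toLp 2 (Fin n → ℝ)).symm w j = w j := fun j => rfl
      simp only [hco]
      rw [EuclideanSpace.norm_eq]
      have hnormsq : ∀ i : Fin n, ‖w i‖ ^ 2 = w i ^ 2 := fun i => by
        rw [Real.norm_eq_abs, sq_abs]
      simp only [hnormsq]
      exact (Real.sqrt_le_sqrt_iff hs).symm
    rw [h2, EuclideanSpace.volume_closedBall]
    rw [Fintype.card_fin]
    rw [← ENNReal.ofReal_pow (Real.sqrt_nonneg s), ← ENNReal.ofReal_mul (by positivity)]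
    congr 1
    rw [Real.sqrt_eq_rpow, ← Real.rpow_natCast (s ^ ((1:ℝ)/2)) n, ← Real.rpow_mul hs]
    norm_num
    ring_nf
    simp

lemma vol_halfball {E : Type*} [NormedAddCommGroup E] [InnerProductSpace ℝ E]
    [FiniteDimensional ℝ E] [MeasurableSpace E] [BorelSpace E] (u : E) (hu : ‖u‖ = 1) (r : ℝ) :
    volume (closedBall (0 : E) r ∩ {z | 0 ≤ ⟪z, u⟫}) = volume (closedBall (0 : E) r) / 2 := by
  set G : Set E := closedBall (0 : E) r ∩ {z | 0 ≤ ⟪z, u⟫} with hG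
  set G' : Set E := closedBall (0 : E) r ∩ {z | ⟪z, u⟫ ≤ 0} with hG'
  set R : E ≃ₗᵢ[ℝ] E := Submodule.reflection (ℝ ∙ u)ᗮ with hR
  have hmeasG : MeasurableSet G :=
    measurableSet_closedBall.inter
      (measurableSet_le measurable_const (measurable_id.inner_const (c := u)))
  have hRinner : ∀ z : E, ⟪R z, u⟫ = -⟪z, u⟫ := by
    intro z
    conv_lhs => rw [show u = R (R u) from (Submodule.reflection_reflection _ u).symm]
    rw [R.inner_map_map]
    rw [show R u = -u from Submodule.reflection_orthogonalComplement_singleton_eq_neg u]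
    rw [inner_neg_right]
  have hpre : R ⁻¹' G = G' := by
    ext z
    simp only [Set.mem_preimage, hG, hG', Set.mem_inter_iff, Set.mem_setOf_eq,
      mem_closedBall_zero_iff, R.norm_map, hRinner]
    constructor
    · rintro ⟨h1, h2⟩; exact ⟨h1, by linarith⟩
    · rintro ⟨h1, h2⟩; exact ⟨h1, by linarith⟩
  have hvol' : volume G' = volume G := by
    rw [← hpre]
    exact R.measurePreserving.measure_preimage hmeasG.nullMeasurableSet
  have hunion : G ∪ G' = closedBall (0 : E) r := by
    ext z
    simp only [hG, hG', Set.mem_union, Set.mem_inter_iff, Set.mem_setOf_eq]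
    constructor
    · rintro (⟨h, _⟩ | ⟨h, _⟩) <;> exact h
    · intro h
      rcases le_total 0 ⟪z, u⟫ with h2 | h2
      · exact Or.inl ⟨h, h2⟩
      · exact Or.inr ⟨h, h2⟩
  have hinter : volume (G ∩ G') = 0 := by
    have hsub : G ∩ G' ⊆ ((ℝ ∙ u)ᗮ : Submodule ℝ E) := by
      rintro z ⟨⟨_, h1⟩, ⟨_, h2⟩⟩
      simp only [Set.mem_setOf_eq] at h1 h2
      rw [SetLike.mem_coe, Submodule.mem_orthogonal_singleton_iff_inner_left]
      linarith
    refine measure_mono_null hsub (Measure.addHaar_submodule _ _ ?_)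
    intro htop
    have : u ∈ (ℝ ∙ u)ᗮ := htop ▸ Submodule.mem_top
    rw [Submodule.mem_orthogonal_singleton_iff_inner_left, real_inner_self_eq_norm_sq, hu] at this
    norm_num at this
  have hmeasG' : MeasurableSet G' :=
    measurableSet_closedBall.inter
      (measurableSet_le (measurable_id.inner_const (c := u)) measurable_const)
  have key : volume G + volume G = volume (closedBall (0 : E) r) := by
    have h := measure_union_add_inter (μ := volume) G hmeasG'
    rw [hunion, hinter, add_zero, hvol'] at h
    exact h.symm
  rw [ENNReal.eq_div_iff (by norm_num) (by norm_num), two_mul, key]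

lemma halfball_integral (n : ℕ) (u : EuclideanSpace ℝ (Fin (n+1))) (hu : ‖u‖ = 1)
    (r : ℝ) (hr : 0 < r) :
    ∫ z in closedBall (0 : EuclideanSpace ℝ (Fin (n+1))) r ∩ {z | 0 ≤ ⟪z, u⟫}, ⟪z, u⟫ =
      (Real.sqrt Real.pi ^ n / Real.Gamma ((n:ℝ)/2 + 1)) * (r ^ (n+2) / ((n:ℝ)+2)) := by
  set c : ℝ := Real.sqrt Real.pi ^ n / Real.Gamma ((n:ℝ)/2 + 1) with hc
  set G : Set (EuclideanSpace ℝ (Fin (n+1))) :=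
    closedBall (0 : EuclideanSpace ℝ (Fin (n+1))) r ∩ {z | 0 ≤ ⟪z, u⟫} with hG
  set e₀ : EuclideanSpace ℝ (Fin (n+1)) := EuclideanSpace.single 0 (1:ℝ) with he₀def
  have he₀ : ‖e₀‖ = 1 := by simp [he₀def]
  set R := Submodule.reflection (ℝ ∙ (u - e₀))ᗮ with hRdef
  have hRu : R u = e₀ := Submodule.reflection_sub (by rw [hu, he₀])
  set κ := (MeasurableEquiv.toLp 2 (Fin (n+1) → ℝ)).symm with hκ
  set π₀ := MeasurableEquiv.piFinSuccAbove (fun _ : Fin (n+1) => ℝ) 0 with hπ₀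
  set ψ : EuclideanSpace ℝ (Fin (n+1)) → ℝ × (Fin n → ℝ) := fun z => π₀ (κ (R z)) with hψ
  have hψmp : MeasurePreserving ψ volume volume :=
    (volume_preserving_piFinSuccAbove (fun _ : Fin (n+1) => ℝ) 0).comp
      ((EuclideanSpace.volume_preserving_symm_measurableEquiv_toLp _).comp R.measurePreserving)
  have hψemb : MeasurableEmbedding ψ :=
    π₀.measurableEmbedding.comp (κ.measurableEmbedding.comp
      R.toHomeomorph.measurableEmbedding)
  have hfst : ∀ z, (ψ z).1 = ⟪z, u⟫ := by
    intro z
    have h1 : (ψ z).1 = (R z) 0 := rfl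
    rw [h1]
    have h2 : ⟪z, u⟫ = ⟪R z, R u⟫ := (R.inner_map_map z u).symm
    rw [h2, hRu, he₀def, EuclideanSpace.inner_single_right]
    simp
  have hsnd : ∀ z (j : Fin n), (ψ z).2 j = (R z) j.succ := fun z j => rfl
  set S : Set (ℝ × (Fin n → ℝ)) := {p | p.1^2 + ∑ j, p.2 j^2 ≤ r^2 ∧ 0 ≤ p.1} with hS
  have hSmeas : MeasurableSet S := by
    apply MeasurableSet.inter
    · exact measurableSet_le ((measurable_fst.pow_const 2).add
        (Finset.measurable_sum _ fun j _ => ((measurable_pi_apply j).comp measurable_snd).pow_const 2))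
        measurable_const
    · exact measurableSet_le measurable_const measurable_fst
  have hGpre : G = ψ ⁻¹' S := by
    ext z
    have hmemS : ψ z ∈ S ↔ (R z 0)^2 + ∑ j : Fin n, (R z) j.succ ^ 2 ≤ r^2 ∧ 0 ≤ R z 0 := Iff.rfl
    simp only [hG, Set.mem_inter_iff, Set.mem_setOf_eq, mem_closedBall_zero_iff,
      Set.mem_preimage, hmemS]
    have h0 : (inner ℝ z u : ℝ) = R z 0 := (hfst z).symm
    have hsum : (R z 0)^2 + ∑ j : Fin n, (R z) j.succ ^ 2 = ∑ i : Fin (n+1), (R z) i ^ 2 :=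
      (Fin.sum_univ_succ (fun i : Fin (n+1) => (R z) i ^ 2)).symm
    have hns : ‖z‖^2 = ∑ i : Fin (n+1), (R z) i ^ 2 := by
      rw [← R.norm_map z, EuclideanSpace.norm_eq, Real.sq_sqrt (by positivity)]
      exact Finset.sum_congr rfl fun i _ => by rw [Real.norm_eq_abs, sq_abs]
    have hnz : ‖z‖ ≤ r ↔ (R z 0)^2 + ∑ j : Fin n, (R z) j.succ ^ 2 ≤ r^2 := by
      rw [hsum, ← hns]
      exact (pow_le_pow_iff_left₀ (norm_nonneg z) hr.le two_ne_zero).symm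
    rw [← h0] at hnz ⊢
    tauto
  have hvolS : volume S ≠ ⊤ := by
    have : volume (ψ ⁻¹' S) = volume S :=
      hψmp.measure_preimage hSmeas.nullMeasurableSet
    rw [← this, ← hGpre]
    exact (lt_of_le_of_lt (measure_mono Set.inter_subset_left)
      (measure_closedBall_lt_top)).ne
  have step1 : ∫ z in G, ⟪z, u⟫ = ∫ p in S, p.1 := by
    rw [hGpre]
    simp_rw [← hfst]
    exact hψmp.setIntegral_preimage_emb hψemb _ _
  rw [step1]
  -- Fubini
  have hInt : Integrable (S.indicator (fun p => p.1)) volume := by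
    rw [integrable_indicator_iff hSmeas]
    apply Measure.integrableOn_of_bounded hvolS measurable_fst.aestronglyMeasurable (M := r)
    apply ae_restrict_of_forall_mem hSmeas
    intro p hp
    rw [Real.norm_eq_abs, abs_le]
    have h1 := hp.1
    have h2 := hp.2
    have hsum : (0:ℝ) ≤ ∑ j, p.2 j ^ 2 := by positivity
    constructor
    · linarith
    · nlinarith
  have hinner : ∀ t : ℝ, (∫ y, S.indicator (fun p => p.1) (t, y)) =
      Set.indicator (Set.Icc 0 r) (fun t => t * ((r^2 - t^2) ^ ((n:ℝ)/2) * c)) t := by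
    intro t
    by_cases ht : t ∈ Set.Icc (0:ℝ) r
    · obtain ⟨ht0, htr⟩ := ht
      have hsub : (0:ℝ) ≤ r^2 - t^2 := by nlinarith
      have heq : (fun y : Fin n → ℝ => S.indicator (fun p => p.1) (t, y)) =
          Set.indicator {y : Fin n → ℝ | ∑ j, y j ^ 2 ≤ r^2 - t^2} (fun _ => t) := by
        funext y
        by_cases hy : ∑ j, y j ^ 2 ≤ r^2 - t^2
        · rw [Set.indicator_of_mem
              (show (t, y) ∈ S from ⟨show t^2 + ∑ j, y j ^ 2 ≤ r^2 by linarith, ht0⟩),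
            Set.indicator_of_mem (show y ∈ {y : Fin n → ℝ | ∑ j, y j ^ 2 ≤ r^2 - t^2} from hy)]
        · rw [Set.indicator_of_notMem
              (show (t, y) ∉ S from fun hmem => hy (by
                have h5 : t^2 + ∑ j, y j ^ 2 ≤ r^2 := hmem.1
                linarith)),
            Set.indicator_of_notMem
              (show y ∉ {y : Fin n → ℝ | ∑ j, y j ^ 2 ≤ r^2 - t^2} from hy)]
      rw [heq, integral_indicator_const _ (by
        apply measurableSet_le _ measurable_const
        exact Finset.measurable_sum _ fun j _ => (measurable_pi_apply j).pow_const 2)]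
      rw [measureReal_def, vol_sum_sq_le n _ hsub, ENNReal.toReal_ofReal (by positivity), smul_eq_mul,
        Set.indicator_of_mem (Set.mem_Icc.mpr ⟨ht0, htr⟩)]
      ring
    · rw [Set.indicator_of_notMem ht]
      have heq : (fun y : Fin n → ℝ => S.indicator (fun p => p.1) (t, y)) = fun _ => 0 := by
        funext y
        apply Set.indicator_of_notMem
        intro hmem
        obtain ⟨h1, h2⟩ := hmem
        apply ht
        refine ⟨h2, ?_⟩
        have hsum : (0:ℝ) ≤ ∑ j, y j ^ 2 := by positivity
        nlinarith
      rw [heq, integral_zero]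
  rw [← integral_indicator hSmeas, Measure.volume_eq_prod, MeasureTheory.integral_prod _ (by rwa [← Measure.volume_eq_prod])]
  simp_rw [hinner]
  rw [integral_indicator measurableSet_Icc, integral_Icc_eq_integral_Ioc,
    ← intervalIntegral.integral_of_le hr.le]
  have : ∀ t : ℝ, t * ((r^2 - t^2) ^ ((n:ℝ)/2) * c) = (t * (r^2 - t^2) ^ ((n:ℝ)/2)) * c :=
    fun t => by ring
  simp_rw [this]
  rw [intervalIntegral.integral_mul_const, ftc_pow n r hr]
  ring

/-- For `X` uniform on the half-ball `B_u(x,r) = B(x,r) ∩ {z : ⟨z-x,u⟩ ≥ 0}` with `u` a unit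
vector, `E[⟨X-x,u⟩/r] = Γ((d+2)/2)/(√π · Γ((d+3)/2))`. -/
theorem uniform_half_ball_mean (d : ℕ) (hd : 1 ≤ d)
    (x u : EuclideanSpace ℝ (Fin d)) (hu : ‖u‖ = 1) (r : ℝ) (hr : 0 < r)
    (H : Set (EuclideanSpace ℝ (Fin d)))
    (hH : H = closedBall x r ∩ {z | 0 ≤ ⟪z - x, u⟫})
    (μ : Measure (EuclideanSpace ℝ (Fin d)))
    (hμ : μ = (volume H)⁻¹ • volume.restrict H) :
    ∫ z, ⟪z - x, u⟫ / r ∂μ =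
      Real.Gamma ((d + 2) / 2) / (Real.sqrt Real.pi * Real.Gamma ((d + 3) / 2)) := by
  obtain ⟨n, rfl⟩ : ∃ n, d = n + 1 := ⟨d - 1, (Nat.succ_pred_eq_of_pos hd).symm⟩
  subst hμ hH
  set G : Set (EuclideanSpace ℝ (Fin (n+1))) :=
    closedBall 0 r ∩ {z | 0 ≤ ⟪z, u⟫} with hGdef
  set H : Set (EuclideanSpace ℝ (Fin (n+1))) :=
    closedBall x r ∩ {z | 0 ≤ ⟪z - x, u⟫} with hHdef
  have hGmeas : MeasurableSet G :=
    measurableSet_closedBall.inter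
      (measurableSet_le measurable_const (measurable_id.inner_const (c := u)))
  have hHpre : H = (fun z => z - x) ⁻¹' G := by
    ext z
    simp only [hHdef, hGdef, Set.mem_inter_iff, Set.mem_setOf_eq, Set.mem_preimage,
      mem_closedBall_iff_norm, mem_closedBall_zero_iff, sub_zero]
  have hT : MeasurePreserving (fun z : EuclideanSpace ℝ (Fin (n+1)) => z - x)
      volume volume := by
    simp_rw [sub_eq_add_neg]
    exact measurePreserving_add_right volume (-x)
  have hTemb : MeasurableEmbedding (fun z : EuclideanSpace ℝ (Fin (n+1)) => z - x) :=
    (Homeomorph.subRight x).measurableEmbedding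
  have hvolHG : volume H = volume G := by
    rw [hHpre]
    exact hT.measure_preimage hGmeas.nullMeasurableSet
  have hIntH : ∫ z in H, ⟪z - x, u⟫ = ∫ z in G, ⟪z, u⟫ := by
    rw [hHpre]
    exact hT.setIntegral_preimage_emb hTemb (fun z => ⟪z, u⟫) G
  have hΓ1 : 0 < Real.Gamma (((n:ℝ)+1)/2 + 1) := Real.Gamma_pos_of_pos (by positivity)
  have hΓ0 : 0 < Real.Gamma ((n:ℝ)/2 + 1) := Real.Gamma_pos_of_pos (by positivity)
  have hsπ : 0 < Real.sqrt Real.pi := Real.sqrt_pos.mpr Real.pi_pos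
  set V : ℝ := r^(n+1) * (Real.sqrt Real.pi^(n+1) / Real.Gamma (((n:ℝ)+1)/2 + 1)) / 2 with hV
  have hVpos : 0 < V := by
    apply div_pos (mul_pos (pow_pos hr _) (div_pos (pow_pos hsπ _) hΓ1)) two_pos
  have hvolH : volume H = ENNReal.ofReal V := by
    rw [hvolHG, hGdef, vol_halfball u hu r, EuclideanSpace.volume_closedBall, Fintype.card_fin,
      ← ENNReal.ofReal_pow hr.le, ← ENNReal.ofReal_mul (by positivity),
      show (2:ℝ≥0∞) = ENNReal.ofReal 2 by norm_num, ← ENNReal.ofReal_div_of_pos two_pos, hV]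
    norm_num
  rw [integral_smul_measure, integral_div, hIntH, hGdef,
    halfball_integral n u hu r hr, hvolH, ENNReal.toReal_inv,
    ENNReal.toReal_ofReal hVpos.le, smul_eq_mul]
  push_cast
  have hG2 : Real.Gamma ((n:ℝ)/2 + 1 + 1) = ((n:ℝ)/2 + 1) * Real.Gamma ((n:ℝ)/2 + 1) :=
    Real.Gamma_add_one (by positivity)
  rw [show ((n:ℝ) + 1 + 2)/2 = ((n:ℝ)+1)/2 + 1 by ring,
    show ((n:ℝ) + 1 + 3)/2 = ((n:ℝ)/2 + 1) + 1 by ring, hG2]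
  rw [hV]
  have hn2 : ((n:ℝ) + 2) ≠ 0 := by positivity
  have hhalf : ((n:ℝ)/2 + 1) ≠ 0 := by positivity
  field_simp
  ring
end

section
/- Let T_n be a sequence of random variables with T_n ∼ Binomial(k'_n, q_n), where q_n·√(k'_n)·ln(n) → 0 and k'_n/(ln n)⁴ → ∞. Then for every λ > 0, the series ∑_n n·P(ln(n)·T_n/√(k'_n) > λ) converges. -/
open Filter
open scoped ENNReal Topology

lemma aux_pow_le_exp_fact (t : ℕ) : ((t : ℝ)) ^ t / t.factorial ≤ Real.exp t := by
  have h := Real.sum_le_exp_of_nonneg (x := (t : ℝ)) (t.cast_nonneg) (t + 1)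
  refine le_trans ?_ h
  exact Finset.single_le_sum (f := fun i => (t : ℝ) ^ i / i.factorial)
    (fun i _ => by positivity) (Finset.self_mem_range_succ t)

lemma aux_choose_bound (k t : ℕ) (q : ℝ) (hq : 0 ≤ q) (ht : 1 ≤ t) :
    (k.choose t : ℝ) * q ^ t ≤ (Real.exp 1 * k * q / t) ^ t := by
  have ht0 : (0 : ℝ) < t := by exact_mod_cast ht
  have hfac : (0 : ℝ) < t.factorial := by exact_mod_cast t.factorial_pos
  have h1 : (k.choose t : ℝ) ≤ (k : ℝ) ^ t / t.factorial := by
    exact_mod_cast Nat.choose_le_pow_div t k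
  have h2 : (1 : ℝ) / t.factorial ≤ Real.exp t / (t : ℝ) ^ t := by
    rw [div_le_div_iff₀ hfac (by positivity)]
    have := aux_pow_le_exp_fact t
    rw [div_le_iff₀ hfac] at this
    linarith [this]
  calc (k.choose t : ℝ) * q ^ t
      ≤ ((k : ℝ) ^ t / t.factorial) * q ^ t :=
        mul_le_mul_of_nonneg_right h1 (pow_nonneg hq t)
    _ = ((k : ℝ) * q) ^ t * (1 / t.factorial) := by rw [mul_pow]; ring
    _ ≤ ((k : ℝ) * q) ^ t * (Real.exp t / (t : ℝ) ^ t) := by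
        exact mul_le_mul_of_nonneg_left h2 (by positivity)
    _ = (Real.exp 1 * k * q / t) ^ t := by
        rw [div_pow, mul_pow, mul_pow, ← Real.exp_one_pow (n := t)]
        ring

/-- pointwise real bound on the event -/
lemma aux_point (K t : ℕ) (Q c μ : ℝ) (hQ0 : 0 ≤ Q) (hμ0 : 0 < μ) (hc0 : 0 < c)
    (htμ : μ < t) (hr : Real.exp 1 * K * Q / μ ≤ Real.exp (-c)) :
    (K.choose t : ℝ) * Q ^ t ≤ Real.exp (-(c * μ)) := by
  have ht1 : 1 ≤ t := by
    by_contra h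
    push_neg at h
    have : t = 0 := Nat.lt_one_iff.mp h
    rw [this] at htμ
    simp at htμ
    linarith
  have ht0 : (0 : ℝ) < t := by exact_mod_cast ht1
  have hnum : 0 ≤ Real.exp 1 * K * Q :=
    mul_nonneg (mul_nonneg (Real.exp_pos 1).le (Nat.cast_nonneg K)) hQ0
  have hr1 : Real.exp 1 * K * Q / t ≤ Real.exp (-c) :=
    le_trans (div_le_div_of_nonneg_left hnum hμ0 htμ.le) hr
  have hr0 : 0 ≤ Real.exp 1 * K * Q / t := div_nonneg hnum ht0.le
  calc (K.choose t : ℝ) * Q ^ t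
      ≤ (Real.exp 1 * K * Q / t) ^ t := aux_choose_bound K t Q hQ0 ht1
    _ ≤ (Real.exp (-c)) ^ t := pow_le_pow_left₀ hr0 hr1 t
    _ = Real.exp (-(c * t)) := by
        rw [← Real.exp_nat_mul]
        congr 1
        ring
    _ ≤ Real.exp (-(c * μ)) := by
        apply Real.exp_le_exp.mpr
        nlinarith
/-- pmf value bound -/
lemma aux_binom_le (K : ℕ) (Q : ℝ) (hQ0 : 0 ≤ Q) (hQ1 : Q ≤ 1) (t : Fin (K + 1)) :
    PMF.binomial (Real.toNNReal Q) (Real.toNNReal_le_one.mpr hQ1) K t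
      ≤ ENNReal.ofReal ((K.choose (t : ℕ) : ℝ) * Q ^ (t : ℕ)) := by
  rw [PMF.binomial_apply]
  refine le_trans (b := ((Real.toNNReal Q ^ (t : ℕ) * 1 * (K.choose (t : ℕ) : ℕ) : NNReal) : ℝ≥0∞)) ?_ ?_
  · apply ENNReal.coe_le_coe.mpr
    gcongr
    exact pow_le_one₀ zero_le tsub_le_self
  · apply le_of_eq
    rw [← ENNReal.ofReal_coe_nnreal]
    congr 1
    push_cast
    rw [Real.coe_toNNReal _ hQ0]
    ring

/-- measure of a set bounded by cardinality times pointwise bound -/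
lemma aux_pmf_measure {m : ℕ} (p : PMF (Fin m)) (S : Set (Fin m)) (M : ℝ) (hM : 0 ≤ M)
    (h : ∀ t ∈ S, p t ≤ ENNReal.ofReal M) : (p.toMeasure S).toReal ≤ m * M := by
  have h1' : p.toMeasure S ≤ (m : ℕ) * ENNReal.ofReal M := by
    rw [PMF.toMeasure_apply_fintype]
    calc ∑ x : Fin m, S.indicator (⇑p) x
        ≤ ∑ _x : Fin m, ENNReal.ofReal M := by
          apply Finset.sum_le_sum
          intro x _
          by_cases hx : x ∈ S
          · rw [Set.indicator_of_mem hx]; exact h x hx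
          · rw [Set.indicator_of_notMem hx]; exact zero_le
      _ = (m : ℕ) * ENNReal.ofReal M := by
          rw [Finset.sum_const, Finset.card_univ, Fintype.card_fin, nsmul_eq_mul]
  have hne : ((m : ℕ) : ℝ≥0∞) * ENNReal.ofReal M ≠ ⊤ :=
    ENNReal.mul_ne_top (ENNReal.natCast_ne_top _) ENNReal.ofReal_ne_top
  have := ENNReal.toReal_mono hne h1'
  rwa [ENNReal.toReal_mul, ENNReal.toReal_natCast, ENNReal.toReal_ofReal hM] at this

set_option maxHeartbeats 1000000 in
/-- If `T_n ∼ Binomial(k'_n, q_n)` with `q_n √(k'_n) ln n → 0` and `k'_n/(ln n)⁴ → ∞`, then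
for every `λ > 0` the series `∑ n · P(ln(n) T_n/√(k'_n) > λ)` converges. -/
theorem binomial_tail_summable (k : ℕ → ℕ) (hk : ∀ n, 0 < k n)
    (q : ℕ → ℝ) (hq0 : ∀ n, 0 ≤ q n) (hq1 : ∀ n, q n ≤ 1)
    (h1 : Tendsto (fun n => q n * Real.sqrt (k n) * Real.log n) atTop (𝓝 0))
    (h2 : Tendsto (fun n => (k n : ℝ) / (Real.log n) ^ 4) atTop atTop)
    (lam : ℝ) (hlam : 0 < lam) :
    Summable (fun (n : ℕ) => (n : ℝ) *
      (((PMF.binomial (Real.toNNReal (q n)) (Real.toNNReal_le_one.mpr (hq1 n)) (k n)).toMeasure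
        {t : Fin (k n + 1) | lam < Real.log n * (t : ℝ) / Real.sqrt (k n)}).toReal)) := by
  set c : ℝ := 11 / lam with hc
  have hc0 : 0 < c := by positivity
  set ε : ℝ := lam * Real.exp (-(c + 1)) with hε
  have hε0 : 0 < ε := by positivity
  have hev : ∀ᶠ n : ℕ in atTop, (n : ℝ) *
      (((PMF.binomial (Real.toNNReal (q n)) (Real.toNNReal_le_one.mpr (hq1 n)) (k n)).toMeasure
        {t : Fin (k n + 1) | lam < Real.log n * (t : ℝ) / Real.sqrt (k n)}).toReal)
      ≤ 1 / (n : ℝ) ^ 2 := by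
    have e1 : ∀ᶠ n in atTop, q n * Real.sqrt (k n) * Real.log n < ε :=
      h1.eventually (gt_mem_nhds hε0)
    have e2 : ∀ᶠ n in atTop, 1 ≤ (k n : ℝ) / (Real.log n) ^ 4 := h2.eventually_ge_atTop 1
    have e3 : ∀ᶠ n : ℕ in atTop, 1 ≤ Real.log n := by
      filter_upwards [eventually_ge_atTop 3] with n hn
      have hn0 : (0 : ℝ) < n := by positivity
      rw [Real.le_log_iff_exp_le hn0]
      calc Real.exp 1 ≤ 3 := by linarith [Real.exp_one_lt_d9]
        _ ≤ (n : ℝ) := by exact_mod_cast hn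
    filter_upwards [e1, e2, e3, eventually_ge_atTop 1] with n hqn hkn hLn hn1
    have hn0 : (0 : ℝ) < n := by positivity
    set K : ℕ := k n with hKdef
    set L : ℝ := Real.log n with hLdef
    have hL0 : (0 : ℝ) < L := lt_of_lt_of_le one_pos hLn
    have hK0 : (0 : ℝ) < K := by exact_mod_cast hk n
    set sk : ℝ := Real.sqrt K with hskdef
    have hsk0 : 0 < sk := Real.sqrt_pos.mpr hK0
    have hsksq : sk * sk = K := Real.mul_self_sqrt hK0.le
    have hL4K : L ^ 4 ≤ (K : ℝ) := by
      rw [le_div_iff₀ (by positivity)] at hkn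
      linarith
    have hskL2 : L ^ 2 ≤ sk := by
      have h' : Real.sqrt (L ^ 4) ≤ sk := Real.sqrt_le_sqrt hL4K
      rwa [show L ^ 4 = (L ^ 2) ^ 2 by ring, Real.sqrt_sq (by positivity)] at h'
    have hXL : L ≤ sk / L := by
      rw [le_div_iff₀ hL0]
      nlinarith
    have hX1 : (1 : ℝ) ≤ sk / L := le_trans hLn hXL
    set μ : ℝ := lam * sk / L with hμdef
    have hμ0 : 0 < μ := by positivity
    set M : ℝ := Real.exp (-(c * μ)) with hM
    have hM0 : 0 ≤ M := (Real.exp_pos _).le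
    -- key ratio bound
    have hr : Real.exp 1 * K * q n / μ ≤ Real.exp (-c) := by
      have heq : Real.exp 1 * K * q n / μ = Real.exp 1 * (q n * sk * L) / lam := by
        rw [hμdef, ← hsksq]
        field_simp
      rw [heq]
      have hstep : Real.exp 1 * (q n * sk * L) / lam ≤ Real.exp 1 * ε / lam := by
        apply (div_le_div_iff_of_pos_right hlam).mpr
        exact mul_le_mul_of_nonneg_left hqn.le (Real.exp_pos 1).le
      refine hstep.trans ?_
      rw [hε, show Real.exp 1 * (lam * Real.exp (-(c + 1))) / lam
          = Real.exp 1 * Real.exp (-(c + 1)) * (lam / lam) by ring,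
        div_self hlam.ne', mul_one, ← Real.exp_add]
      apply le_of_eq
      congr 1
      ring
    -- measure bound
    have hmeas : (((PMF.binomial (Real.toNNReal (q n)) (Real.toNNReal_le_one.mpr (hq1 n)) K).toMeasure
        {t : Fin (K + 1) | lam < L * (t : ℝ) / sk}).toReal) ≤ (K + 1) * M := by
      have := aux_pmf_measure
        (PMF.binomial (Real.toNNReal (q n)) (Real.toNNReal_le_one.mpr (hq1 n)) K)
        {t : Fin (K + 1) | lam < L * (t : ℝ) / sk} M hM0 ?_
      · rw [Nat.cast_add, Nat.cast_one] at this
        exact this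
      · intro t ht
        have htμ : μ < ((t : ℕ) : ℝ) := by
          have h' : lam < L * ((t : ℕ) : ℝ) / sk := ht
          rw [lt_div_iff₀ hsk0] at h'
          rw [hμdef, div_lt_iff₀ hL0]
          nlinarith
        refine le_trans (aux_binom_le K (q n) (hq0 n) (hq1 n) t) ?_
        exact ENNReal.ofReal_le_ofReal (aux_point K (t : ℕ) (q n) c μ (hq0 n) hμ0 hc0 htμ hr)
    -- combine
    have hcμ : c * μ = 11 * (sk / L) := by
      rw [hc, hμdef]
      field_simp
    have hKexp : ((K : ℝ) + 1) ≤ Real.exp (5 * (sk / L)) := by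
      have hK1 : (1 : ℝ) ≤ K := by exact_mod_cast hk n
      rw [← Real.log_le_iff_le_exp (by positivity)]
      have hlog2 : Real.log ((K : ℝ) + 1) ≤ Real.log (2 * K) := by
        apply Real.log_le_log (by positivity)
        linarith
      have hlog3 : Real.log (2 * (K : ℝ)) = Real.log 2 + Real.log K :=
        Real.log_mul two_ne_zero hK0.ne'
      have hlog4 : Real.log 2 ≤ 1 := by
        linarith [Real.log_le_sub_one_of_pos (show (0:ℝ) < 2 by norm_num)]
      have hlog5 : Real.log K ≤ 4 * (K : ℝ) ^ ((1 : ℝ)/4) := by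
        calc Real.log (K : ℝ) ≤ (K : ℝ) ^ ((1:ℝ)/4) / (1/4) :=
              Real.log_le_rpow_div (Nat.cast_nonneg K) (by norm_num)
          _ = 4 * (K : ℝ) ^ ((1:ℝ)/4) := by ring
      have hquarter : (K : ℝ) ^ ((1:ℝ)/4) ≤ sk / L := by
        rw [le_div_iff₀ hL0]
        have hLle : L ≤ (K : ℝ) ^ ((1:ℝ)/4) := by
          have h' : (L ^ (4:ℕ)) ^ ((1:ℝ)/4) ≤ (K : ℝ) ^ ((1:ℝ)/4) := by
            apply Real.rpow_le_rpow (by positivity) ?_ (by norm_num)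
            exact_mod_cast hL4K
          rwa [← Real.rpow_natCast L 4, ← Real.rpow_mul hL0.le,
            show ((4:ℕ):ℝ) * ((1:ℝ)/4) = 1 by norm_num, Real.rpow_one] at h'
        calc (K : ℝ) ^ ((1:ℝ)/4) * L ≤ (K : ℝ) ^ ((1:ℝ)/4) * (K : ℝ) ^ ((1:ℝ)/4) :=
              mul_le_mul_of_nonneg_left hLle (by positivity)
          _ = (K : ℝ) ^ ((1:ℝ)/2) := by
              rw [← Real.rpow_add hK0]; norm_num
          _ = sk := by rw [hskdef, Real.sqrt_eq_rpow]
      calc Real.log ((K : ℝ) + 1) ≤ Real.log 2 + Real.log K := by rw [← hlog3]; exact hlog2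
        _ ≤ 1 + 4 * (K : ℝ) ^ ((1:ℝ)/4) := by linarith
        _ ≤ 1 + 4 * (sk / L) := by linarith
        _ ≤ 5 * (sk / L) := by linarith
    have hnexp : (n : ℝ) ≤ Real.exp L := by
      rw [hLdef, Real.exp_log hn0]
    calc (n : ℝ) *
        (((PMF.binomial (Real.toNNReal (q n)) (Real.toNNReal_le_one.mpr (hq1 n)) K).toMeasure
          {t : Fin (K + 1) | lam < L * (t : ℝ) / sk}).toReal)
        ≤ (n : ℝ) * (((K : ℝ) + 1) * M) :=
          mul_le_mul_of_nonneg_left hmeas (Nat.cast_nonneg n)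
      _ ≤ Real.exp L * (Real.exp (5 * (sk / L)) * M) := by
          apply mul_le_mul hnexp (mul_le_mul_of_nonneg_right hKexp hM0) (by positivity)
            (Real.exp_pos L).le
      _ = Real.exp (L + 5 * (sk / L) - 11 * (sk / L)) := by
          rw [hM, hcμ, ← Real.exp_add, ← Real.exp_add]
          congr 1
          ring
      _ ≤ Real.exp (-(2 * L)) := by
          apply Real.exp_le_exp.mpr
          nlinarith
      _ = 1 / (n : ℝ) ^ 2 := by
          rw [show -(2 * L) = -(((2:ℕ):ℝ) * L) by norm_num, Real.exp_neg, Real.exp_nat_mul,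
            hLdef, Real.exp_log hn0, one_div]
  obtain ⟨N, hN⟩ := eventually_atTop.mp hev
  rw [← summable_nat_add_iff N]
  apply Summable.of_nonneg_of_le
    (fun m => mul_nonneg (Nat.cast_nonneg _) ENNReal.toReal_nonneg)
    (fun m => hN (m + N) (Nat.le_add_left N m))
  exact (summable_nat_add_iff N).mpr (Real.summable_one_div_nat_pow.mpr one_lt_two)
end

section
/- Let (k_n) satisfy k_n/(ln n)⁴ → ∞. Define H_k(ε) = exp(−k·ε^{2/3}(d+2)^{−4/3}/(d²(k^{1/3} + (d+2)^{1/3}ε^{1/3})²)), R_k(ε) = exp(−k^{1/3}ε^{2/3}/(d²(d+2)^{4/3})), and G_k(t) = min_{ε∈[0,t]}((2e³/9)F_d(t−ε) + (d²+d)H_k(ε) + 2d·R_k(ε)), where F_d is the chi-square(d) upper tail. Then for every λ > 4, the series ∑_n n·G_{k_n}(λ·ln n) converges. -/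
open MeasureTheory Filter
open scoped Topology

noncomputable section

/-- The upper tail `F_d(x) = P(χ²(d) > x)` of the chi-square distribution with `d` degrees
of freedom. -/
def chiSqTail (d : ℕ) (x : ℝ) : ℝ :=
  ∫ y in Set.Ioi x, y ^ ((d : ℝ) / 2 - 1) * Real.exp (-y / 2) /
    (2 ^ ((d : ℝ) / 2) * Real.Gamma ((d : ℝ) / 2))

/-- The function `H_k(ε)` of the paper. -/
def Hfun (d k : ℕ) (ε : ℝ) : ℝ :=
  Real.exp (-((k : ℝ) * ε ^ ((2 : ℝ) / 3) * ((d : ℝ) + 2) ^ (-(4 : ℝ) / 3)) /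
    ((d : ℝ) ^ 2 * ((k : ℝ) ^ ((1 : ℝ) / 3) + ((d : ℝ) + 2) ^ ((1 : ℝ) / 3) * ε ^ ((1 : ℝ) / 3)) ^ 2))

/-- The function `R_k(ε)` of the paper. -/
def Rfun (d k : ℕ) (ε : ℝ) : ℝ :=
  Real.exp (-((k : ℝ) ^ ((1 : ℝ) / 3) * ε ^ ((2 : ℝ) / 3)) /
    ((d : ℝ) ^ 2 * ((d : ℝ) + 2) ^ ((4 : ℝ) / 3)))

/-- The function `G_k(t)` of the paper: minimum over `ε ∈ [0,t]` of
`(2e³/9)F_d(t−ε) + (d²+d)H_k(ε) + 2d R_k(ε)`. -/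
def Gfun (d k : ℕ) (t : ℝ) : ℝ :=
  sInf ((fun ε => (2 * Real.exp 3 / 9) * chiSqTail d (t - ε) +
    ((d : ℝ) ^ 2 + d) * Hfun d k ε + 2 * d * Rfun d k ε) '' Set.Icc 0 t)

lemma chiSqTail_nonneg (d : ℕ) {x : ℝ} (hx : 0 ≤ x) : 0 ≤ chiSqTail d x := by
  apply setIntegral_nonneg measurableSet_Ioi
  intro y hy
  have hy0 : 0 ≤ y := hx.trans (le_of_lt hy)
  apply div_nonneg
  · exact mul_nonneg (Real.rpow_nonneg hy0 _) (Real.exp_nonneg _)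
  · exact mul_nonneg (Real.rpow_nonneg (by norm_num) _)
      (Real.Gamma_nonneg_of_nonneg (by positivity))

lemma chiSqTail_le (d : ℕ) (hd : 1 ≤ d) {c : ℝ} (hc0 : 0 < c) (hc : c < 1/2) :
    ∃ C : ℝ, 0 < C ∧ ∀ x : ℝ, 1 ≤ x → chiSqTail d x ≤ C * Real.exp (-(c * x)) := by
  have hD : (1:ℝ) ≤ d := by exact_mod_cast hd
  set D : ℝ := (d : ℝ) with hDdef
  set δ : ℝ := 1/2 - c with hδdef
  have hδ : 0 < δ := by simp only [hδdef]; linarith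
  have hDpos : 0 < D := by linarith
  have hA : 0 < 2 ^ (D / 2) * Real.Gamma (D / 2) := by
    apply mul_pos (Real.rpow_pos_of_pos (by norm_num) _)
    exact Real.Gamma_pos_of_pos (by positivity)
  set A : ℝ := 2 ^ (D / 2) * Real.Gamma (D / 2) with hAdef
  set C₀ : ℝ := (D/δ)^D / A with hC₀def
  have hC₀ : 0 < C₀ := by
    apply div_pos (Real.rpow_pos_of_pos (by positivity) _) hA
  refine ⟨C₀ / c, by positivity, ?_⟩
  intro x hx
  -- pointwise bound
  have hpt : ∀ y ∈ Set.Ioi x, y ^ (D / 2 - 1) * Real.exp (-y / 2) / A ≤ C₀ * Real.exp (-(c * y)) := by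
    intro y hy
    have hy1 : 1 ≤ y := hx.trans (le_of_lt hy)
    have hy0 : 0 < y := by linarith
    have h1 : y ^ (D/2 - 1) ≤ y ^ D :=
      Real.rpow_le_rpow_of_exponent_le hy1 (by linarith)
    have h2 : y ≤ (D/δ) * Real.exp (δ * y / D) := by
      have ht : δ * y / D ≤ Real.exp (δ * y / D) := by
        linarith [Real.add_one_le_exp (δ * y / D)]
      have := mul_le_mul_of_nonneg_left ht (le_of_lt (div_pos hDpos hδ))
      calc y = (D/δ) * (δ * y / D) := by field_simp
        _ ≤ (D/δ) * Real.exp (δ * y / D) := this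
    have h3 : y ^ D ≤ (D/δ)^D * Real.exp (δ * y) := by
      have := Real.rpow_le_rpow (le_of_lt hy0) h2 (le_of_lt hDpos)
      rw [Real.mul_rpow (by positivity) (Real.exp_nonneg _)] at this
      have hexp : Real.exp (δ * y / D) ^ D = Real.exp (δ * y) := by
        rw [Real.rpow_def_of_pos (Real.exp_pos _), Real.log_exp]
        congr 1
        field_simp
      rwa [hexp] at this
    have h4 : y ^ (D/2 - 1) * Real.exp (-y/2) ≤ (D/δ)^D * Real.exp (-(c*y)) := by
      have h5 : y ^ (D/2-1) * Real.exp (-y/2) ≤ ((D/δ)^D * Real.exp (δ*y)) * Real.exp (-y/2) :=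
        mul_le_mul_of_nonneg_right (h1.trans h3) (Real.exp_nonneg _)
      calc y ^ (D/2-1) * Real.exp (-y/2) ≤ ((D/δ)^D * Real.exp (δ*y)) * Real.exp (-y/2) := h5
        _ = (D/δ)^D * Real.exp (-(c*y)) := by
            rw [mul_assoc, ← Real.exp_add]
            congr 2
            simp only [hδdef]; ring
    rw [div_le_iff₀ hA]
    calc y ^ (D/2-1) * Real.exp (-y/2) ≤ (D/δ)^D * Real.exp (-(c*y)) := h4
      _ = C₀ * Real.exp (-(c * y)) * A := by
          simp only [hC₀def]; field_simp
  -- integral of the bound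
  have hint : IntegrableOn (fun y : ℝ => C₀ * Real.exp (-(c * y))) (Set.Ioi x) := by
    have := (exp_neg_integrableOn_Ioi x hc0).const_mul C₀
    simpa [neg_mul, IntegrableOn] using this
  have hval : ∫ y in Set.Ioi x, C₀ * Real.exp (-(c * y)) = C₀ * (Real.exp (-(c*x)) / c) := by
    rw [MeasureTheory.integral_const_mul]
    congr 1
    have hderiv : ∀ y ∈ Set.Ici x, HasDerivAt (fun y => -Real.exp (-(c*y)) / c) (Real.exp (-(c*y))) y := by
      intro y _
      have h := (((hasDerivAt_id y).const_mul c).neg.exp).neg.div_const c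
      refine h.congr_deriv ?_
      simp only [Pi.neg_apply, id, mul_one]; field_simp
    have htend : Tendsto (fun y => -Real.exp (-(c*y)) / c) atTop (nhds 0) := by
      have : Tendsto (fun y : ℝ => Real.exp (-(c*y))) atTop (nhds 0) := by
        apply Real.tendsto_exp_atBot.comp
        exact (tendsto_id.const_mul_atTop_of_neg (by linarith) : Tendsto (fun y : ℝ => -c * y) atTop atBot).congr (by intro y; ring)
      have := (this.neg).div_const c
      simpa using this
    have hint2 : IntegrableOn (fun y : ℝ => Real.exp (-(c * y))) (Set.Ioi x) := by
      simpa [neg_mul] using (exp_neg_integrableOn_Ioi x hc0)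
    have := MeasureTheory.integral_Ioi_of_hasDerivAt_of_tendsto' hderiv hint2 htend
    rw [this]
    field_simp; ring
  have hmono : chiSqTail d x ≤ ∫ y in Set.Ioi x, C₀ * Real.exp (-(c * y)) := by
    unfold chiSqTail
    apply integral_mono_of_nonneg
    · filter_upwards [self_mem_ae_restrict (measurableSet_Ioi : MeasurableSet (Set.Ioi x))] with y hy
      have hy0 : (0:ℝ) ≤ y := by have : (1:ℝ) ≤ y := hx.trans (le_of_lt hy); linarith
      apply div_nonneg (mul_nonneg (Real.rpow_nonneg hy0 _) (Real.exp_nonneg _)) (le_of_lt hA)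
    · exact hint
    · filter_upwards [self_mem_ae_restrict (measurableSet_Ioi : MeasurableSet (Set.Ioi x))] with y hy
      exact hpt y hy
  calc chiSqTail d x ≤ ∫ y in Set.Ioi x, C₀ * Real.exp (-(c * y)) := hmono
    _ = C₀ / c * Real.exp (-(c*x)) := by rw [hval]; ring

lemma Gfun_le (d k : ℕ) {t ε : ℝ} (hε : ε ∈ Set.Icc 0 t) :
    Gfun d k t ≤ (2 * Real.exp 3 / 9) * chiSqTail d (t - ε) +
      ((d : ℝ) ^ 2 + d) * Hfun d k ε + 2 * d * Rfun d k ε := by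
  refine csInf_le ⟨0, ?_⟩ (Set.mem_image_of_mem _ hε)
  rintro y ⟨e, he, rfl⟩
  have h1 : 0 ≤ t - e := sub_nonneg.mpr he.2
  have h2 := chiSqTail_nonneg d h1
  have h3 : 0 ≤ Hfun d k e := (Real.exp_pos _).le
  have h4 : 0 ≤ Rfun d k e := (Real.exp_pos _).le
  have hD : (0:ℝ) ≤ d := Nat.cast_nonneg d
  positivity

lemma Gfun_nonneg (d k : ℕ) {t : ℝ} (ht : 0 ≤ t) : 0 ≤ Gfun d k t := by
  apply Real.sInf_nonneg
  rintro y ⟨e, he, rfl⟩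
  have h1 : 0 ≤ t - e := sub_nonneg.mpr he.2
  have h2 := chiSqTail_nonneg d h1
  have h3 : 0 ≤ Hfun d k e := (Real.exp_pos _).le
  have h4 : 0 ≤ Rfun d k e := (Real.exp_pos _).le
  have hD : (0:ℝ) ≤ d := Nat.cast_nonneg d
  positivity

lemma key_exp (kk : ℕ) {ε₁ l : ℝ} (hε₁ : 0 < ε₁) (hlp : 0 < l) (hkl : l^4 ≤ (kk:ℝ)) :
    ε₁^((2:ℝ)/3) * (l * l) ≤ (kk:ℝ)^((1:ℝ)/3) * (ε₁*l)^((2:ℝ)/3) := by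
  have h13 : l^((4:ℝ)/3) ≤ (kk:ℝ)^((1:ℝ)/3) := by
    have h0 : ((l^4 : ℝ)) ^ ((1:ℝ)/3) ≤ (kk:ℝ)^((1:ℝ)/3) :=
      Real.rpow_le_rpow (by positivity) hkl (by norm_num)
    rw [← Real.rpow_natCast l 4, ← Real.rpow_mul hlp.le] at h0
    norm_num at h0
    convert h0 using 2 <;> norm_num
  have hε23' : (ε₁*l)^((2:ℝ)/3) = ε₁^((2:ℝ)/3) * l^((2:ℝ)/3) :=
    Real.mul_rpow hε₁.le hlp.le
  have hll : l^((4:ℝ)/3) * l^((2:ℝ)/3) = l * l := by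
    rw [← Real.rpow_add hlp, show (4:ℝ)/3 + 2/3 = 2 by norm_num, Real.rpow_two]
    ring
  calc ε₁^((2:ℝ)/3) * (l * l) = l^((4:ℝ)/3) * (ε₁^((2:ℝ)/3) * l^((2:ℝ)/3)) := by
        rw [show l^((4:ℝ)/3) * (ε₁^((2:ℝ)/3) * l^((2:ℝ)/3)) = ε₁^((2:ℝ)/3) * (l^((4:ℝ)/3) * l^((2:ℝ)/3)) by ring, hll]
    _ ≤ (kk:ℝ)^((1:ℝ)/3) * (ε₁^((2:ℝ)/3) * l^((2:ℝ)/3)) := by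
        apply mul_le_mul_of_nonneg_right h13 (by positivity)
    _ = (kk:ℝ)^((1:ℝ)/3) * (ε₁*l)^((2:ℝ)/3) := by rw [hε23']

lemma Rfun_exp_le (d : ℕ) (hd : 1 ≤ d) (kk : ℕ) {ε₁ l : ℝ} (hε₁ : 0 < ε₁)
    (hl1 : 1 ≤ l)
    (hl3 : 3 * ((d:ℝ)^2 * ((d:ℝ)+2)^((4:ℝ)/3)) / ε₁^((2:ℝ)/3) ≤ l)
    (hkl : l^4 ≤ (kk:ℝ)) :
    Rfun d kk (ε₁ * l) ≤ Real.exp (-(3*l)) := by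
  have hlp : 0 < l := by linarith
  have hk0 : (0:ℝ) < kk := lt_of_lt_of_le (by positivity) hkl
  have hε23 : (0:ℝ) < ε₁^((2:ℝ)/3) := Real.rpow_pos_of_pos hε₁ _
  have hD : (1:ℝ) ≤ d := by exact_mod_cast hd
  set denR : ℝ := (d:ℝ)^2 * ((d:ℝ)+2)^((4:ℝ)/3) with hdenR
  have hdenRpos : 0 < denR := by
    apply mul_pos (by positivity) (Real.rpow_pos_of_pos (by linarith) _)
  have hkey : ε₁^((2:ℝ)/3) * (l * l) ≤ (kk:ℝ)^((1:ℝ)/3) * (ε₁*l)^((2:ℝ)/3) :=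
    key_exp kk hε₁ hlp hkl
  -- conclude
  have hfin : 3 * l ≤ ((kk:ℝ)^((1:ℝ)/3) * (ε₁*l)^((2:ℝ)/3)) / denR := by
    rw [le_div_iff₀ hdenRpos]
    have hA : 3 * denR ≤ ε₁^((2:ℝ)/3) * l := by
      have := (div_le_iff₀ hε23).mp hl3
      calc 3 * denR ≤ l * ε₁^((2:ℝ)/3) := this
        _ = ε₁^((2:ℝ)/3) * l := by ring
    calc 3 * l * denR = (3 * denR) * l := by ring
      _ ≤ (ε₁^((2:ℝ)/3) * l) * l := mul_le_mul_of_nonneg_right hA hlp.le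
      _ = ε₁^((2:ℝ)/3) * (l * l) := by ring
      _ ≤ (kk:ℝ)^((1:ℝ)/3) * (ε₁*l)^((2:ℝ)/3) := hkey
  unfold Rfun
  rw [Real.exp_le_exp, hdenR] at *
  rw [neg_div]
  linarith [hfin]

lemma Hfun_exp_le (d : ℕ) (hd : 1 ≤ d) (kk : ℕ) {ε₁ l : ℝ} (hε₁ : 0 < ε₁)
    (hl1 : 1 ≤ l) (hlε : ε₁ ≤ l)
    (hl4 : 3 * ((d:ℝ)^2 * (1 + ((d:ℝ)+2)^((1:ℝ)/3))^2) /
      (ε₁^((2:ℝ)/3) * ((d:ℝ)+2)^(-(4:ℝ)/3)) ≤ l)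
    (hkl : l^4 ≤ (kk:ℝ)) :
    Hfun d kk (ε₁ * l) ≤ Real.exp (-(3*l)) := by
  have hlp : 0 < l := by linarith
  have hk0 : (0:ℝ) < kk := lt_of_lt_of_le (by positivity) hkl
  have hD : (1:ℝ) ≤ d := by exact_mod_cast hd
  have hD2 : (0:ℝ) < (d:ℝ) + 2 := by linarith
  have hP : (0:ℝ) < ((d:ℝ)+2)^(-(4:ℝ)/3) := Real.rpow_pos_of_pos hD2 _
  have hε23 : (0:ℝ) < ε₁^((2:ℝ)/3) := Real.rpow_pos_of_pos hε₁ _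
  have hεnn : (0:ℝ) ≤ ε₁ * l := by positivity
  have hkey := key_exp kk hε₁ hlp hkl
  set cH : ℝ := (d:ℝ)^2 * (1 + ((d:ℝ)+2)^((1:ℝ)/3))^2 with hcH
  have hcHpos : 0 < cH := by
    have : (0:ℝ) < ((d:ℝ)+2)^((1:ℝ)/3) := Real.rpow_pos_of_pos hD2 _
    positivity
  have hεk : ε₁ * l ≤ (kk:ℝ) := by
    have h1 : ε₁ * l ≤ l * l := mul_le_mul_of_nonneg_right hlε hlp.le
    have h11 : (1:ℝ) ≤ l * l := by nlinarith
    have h12 : l*l*1 ≤ l*l*(l*l) := mul_le_mul_of_nonneg_left h11 (by positivity)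
    have h2 : l * l ≤ l^4 := by nlinarith [h12]
    linarith
  have hdenpos : (0:ℝ) < (d:ℝ)^2 * ((kk:ℝ)^((1:ℝ)/3) + ((d:ℝ)+2)^((1:ℝ)/3) * (ε₁*l)^((1:ℝ)/3))^2 := by
    have h1 : (0:ℝ) < (kk:ℝ)^((1:ℝ)/3) := Real.rpow_pos_of_pos hk0 _
    have h2 : (0:ℝ) ≤ ((d:ℝ)+2)^((1:ℝ)/3) * (ε₁*l)^((1:ℝ)/3) := by
      apply mul_nonneg (Real.rpow_nonneg hD2.le _) (Real.rpow_nonneg hεnn _)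
    have h3 : (0:ℝ) < (d:ℝ) := by linarith
    have h4 : (0:ℝ) < (kk:ℝ)^((1:ℝ)/3) + ((d:ℝ)+2)^((1:ℝ)/3) * (ε₁*l)^((1:ℝ)/3) := by linarith
    exact mul_pos (pow_pos h3 2) (pow_pos h4 2)
  have hsq : ((kk:ℝ)^((1:ℝ)/3))^2 = (kk:ℝ)^((2:ℝ)/3) := by
    rw [← Real.rpow_natCast ((kk:ℝ)^((1:ℝ)/3)) 2, ← Real.rpow_mul hk0.le]
    norm_num
  have hden_le : (d:ℝ)^2 * ((kk:ℝ)^((1:ℝ)/3) + ((d:ℝ)+2)^((1:ℝ)/3) * (ε₁*l)^((1:ℝ)/3))^2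
      ≤ cH * (kk:ℝ)^((2:ℝ)/3) := by
    have hsum : (kk:ℝ)^((1:ℝ)/3) + ((d:ℝ)+2)^((1:ℝ)/3) * (ε₁*l)^((1:ℝ)/3)
        ≤ (1 + ((d:ℝ)+2)^((1:ℝ)/3)) * (kk:ℝ)^((1:ℝ)/3) := by
      have h1 : (ε₁*l)^((1:ℝ)/3) ≤ (kk:ℝ)^((1:ℝ)/3) :=
        Real.rpow_le_rpow hεnn hεk (by norm_num)
      have h2 : ((d:ℝ)+2)^((1:ℝ)/3) * (ε₁*l)^((1:ℝ)/3)
          ≤ ((d:ℝ)+2)^((1:ℝ)/3) * (kk:ℝ)^((1:ℝ)/3) :=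
        mul_le_mul_of_nonneg_left h1 (Real.rpow_nonneg hD2.le _)
      nlinarith
    have hsumnn : (0:ℝ) ≤ (kk:ℝ)^((1:ℝ)/3) + ((d:ℝ)+2)^((1:ℝ)/3) * (ε₁*l)^((1:ℝ)/3) := by
      apply add_nonneg (Real.rpow_nonneg hk0.le _)
      exact mul_nonneg (Real.rpow_nonneg hD2.le _) (Real.rpow_nonneg hεnn _)
    have := pow_le_pow_left₀ hsumnn hsum 2
    calc (d:ℝ)^2 * ((kk:ℝ)^((1:ℝ)/3) + ((d:ℝ)+2)^((1:ℝ)/3) * (ε₁*l)^((1:ℝ)/3))^2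
        ≤ (d:ℝ)^2 * ((1 + ((d:ℝ)+2)^((1:ℝ)/3)) * (kk:ℝ)^((1:ℝ)/3))^2 := by
          apply mul_le_mul_of_nonneg_left this (by positivity)
      _ = cH * (kk:ℝ)^((2:ℝ)/3) := by
          rw [mul_pow, ← hsq]; ring
  have hksplit : (kk:ℝ)^((2:ℝ)/3) * (kk:ℝ)^((1:ℝ)/3) = (kk:ℝ) := by
    rw [← Real.rpow_add hk0]; norm_num
  have hfin : 3 * l ≤ ((kk:ℝ) * (ε₁*l)^((2:ℝ)/3) * ((d:ℝ)+2)^(-(4:ℝ)/3)) /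
      ((d:ℝ)^2 * ((kk:ℝ)^((1:ℝ)/3) + ((d:ℝ)+2)^((1:ℝ)/3) * (ε₁*l)^((1:ℝ)/3))^2) := by
    rw [le_div_iff₀ hdenpos]
    have hA : 3 * cH ≤ ε₁^((2:ℝ)/3) * ((d:ℝ)+2)^(-(4:ℝ)/3) * l := by
      have := (div_le_iff₀ (by positivity : (0:ℝ) < ε₁^((2:ℝ)/3) * ((d:ℝ)+2)^(-(4:ℝ)/3))).mp hl4
      linarith
    have hstep : 3 * l * cH ≤ (kk:ℝ)^((1:ℝ)/3) * (ε₁*l)^((2:ℝ)/3) * ((d:ℝ)+2)^(-(4:ℝ)/3) := by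
      calc 3 * l * cH = (3 * cH) * l := by ring
        _ ≤ (ε₁^((2:ℝ)/3) * ((d:ℝ)+2)^(-(4:ℝ)/3) * l) * l :=
            mul_le_mul_of_nonneg_right hA hlp.le
        _ = (ε₁^((2:ℝ)/3) * (l * l)) * ((d:ℝ)+2)^(-(4:ℝ)/3) := by ring
        _ ≤ ((kk:ℝ)^((1:ℝ)/3) * (ε₁*l)^((2:ℝ)/3)) * ((d:ℝ)+2)^(-(4:ℝ)/3) :=
            mul_le_mul_of_nonneg_right hkey hP.le
        _ = (kk:ℝ)^((1:ℝ)/3) * (ε₁*l)^((2:ℝ)/3) * ((d:ℝ)+2)^(-(4:ℝ)/3) := by ring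
    calc 3 * l * ((d:ℝ)^2 * ((kk:ℝ)^((1:ℝ)/3) + ((d:ℝ)+2)^((1:ℝ)/3) * (ε₁*l)^((1:ℝ)/3))^2)
        ≤ 3 * l * (cH * (kk:ℝ)^((2:ℝ)/3)) := by
          apply mul_le_mul_of_nonneg_left hden_le (by positivity)
      _ = (3 * l * cH) * (kk:ℝ)^((2:ℝ)/3) := by ring
      _ ≤ ((kk:ℝ)^((1:ℝ)/3) * (ε₁*l)^((2:ℝ)/3) * ((d:ℝ)+2)^(-(4:ℝ)/3)) * (kk:ℝ)^((2:ℝ)/3) :=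
          mul_le_mul_of_nonneg_right hstep (Real.rpow_nonneg hk0.le _)
      _ = ((kk:ℝ)^((2:ℝ)/3) * (kk:ℝ)^((1:ℝ)/3)) * (ε₁*l)^((2:ℝ)/3) * ((d:ℝ)+2)^(-(4:ℝ)/3) := by ring
      _ = (kk:ℝ) * (ε₁*l)^((2:ℝ)/3) * ((d:ℝ)+2)^(-(4:ℝ)/3) := by rw [hksplit]
  unfold Hfun
  rw [Real.exp_le_exp, neg_div]
  linarith [hfin]

lemma mul_exp_neg_log (n : ℝ) (hn : 0 < n) (r : ℝ) :
    n * Real.exp (-(r * Real.log n)) = n ^ (1 - r) := by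
  rw [Real.rpow_def_of_pos hn,
    show Real.log n * (1 - r) = Real.log n + -(r * Real.log n) by ring,
    Real.exp_add, Real.exp_log hn]

/-- If `k_n/(ln n)⁴ → ∞`, then for every `λ > 4` the series `∑ n G_{k_n}(λ ln n)` converges. -/
theorem summable_n_mul_G (d : ℕ) (hd : 1 ≤ d) (k : ℕ → ℕ)
    (hk : Tendsto (fun n => (k n : ℝ) / (Real.log n) ^ 4) atTop atTop)
    (lam : ℝ) (hlam : 4 < lam) :
    Summable (fun (n : ℕ) => (n : ℝ) * Gfun d (k n) (lam * Real.log n)) := by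
  have hD : (1:ℝ) ≤ d := by exact_mod_cast hd
  -- constants
  set μ : ℝ := (lam + 4)/2 with hμdef
  have hμ : 4 < μ := by rw [hμdef]; linarith
  have hμ0 : 0 < μ := by linarith
  set c : ℝ := 1/4 + 1/μ with hcdef
  have hc0 : 0 < c := by rw [hcdef]; positivity
  have hc : c < 1/2 := by
    have h1 : 1/μ < 1/4 := by
      apply one_div_lt_one_div_of_lt <;> linarith
    rw [hcdef]; linarith
  have hcμ : 2 < c * μ := by
    have : c * μ = μ/4 + 1 := by rw [hcdef]; field_simp
    rw [this]; linarith
  obtain ⟨C, hC, hCtail⟩ := chiSqTail_le d hd hc0 hc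
  set ε₁ : ℝ := (lam - 4)/2 with hε₁def
  have hε₁ : 0 < ε₁ := by rw [hε₁def]; linarith
  -- eventual hypotheses
  have hlog : Tendsto (fun n : ℕ => Real.log n) atTop atTop :=
    Real.tendsto_log_atTop.comp tendsto_natCast_atTop_atTop
  have hkbig : ∀ᶠ n : ℕ in atTop, (Real.log n)^4 ≤ (k n : ℝ) := by
    filter_upwards [hk.eventually_ge_atTop 1, hlog.eventually_gt_atTop 0] with n h1 h2
    have hp : (0:ℝ) < (Real.log n)^4 := by positivity
    calc (Real.log n)^4 = 1 * (Real.log n)^4 := by ring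
      _ ≤ ((k n : ℝ) / (Real.log n)^4) * (Real.log n)^4 :=
          mul_le_mul_of_nonneg_right h1 hp.le
      _ = (k n : ℝ) := by field_simp
  set L : ℝ := max (max 1 ε₁)
    (max (3 * ((d:ℝ)^2 * ((d:ℝ)+2)^((4:ℝ)/3)) / ε₁^((2:ℝ)/3))
      (3 * ((d:ℝ)^2 * (1 + ((d:ℝ)+2)^((1:ℝ)/3))^2) /
        (ε₁^((2:ℝ)/3) * ((d:ℝ)+2)^(-(4:ℝ)/3)))) with hLdef
  -- the eventual bound
  have hbound : ∀ᶠ n : ℕ in atTop,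
      (n:ℝ) * Gfun d (k n) (lam * Real.log n)
        ≤ (2 * Real.exp 3 / 9 * C) * (n:ℝ)^(1 - c*μ) +
          ((d:ℝ)^2 + 3*d) * (n:ℝ)^(1 - (3:ℝ)) := by
    filter_upwards [hkbig, hlog.eventually_ge_atTop L] with n hkn hLn
    have hl1 : 1 ≤ Real.log n := le_trans (le_trans (le_max_left _ _) (le_max_left _ _)) hLn
    have hlε : ε₁ ≤ Real.log n := le_trans (le_trans (le_max_right _ _) (le_max_left _ _)) hLn
    have hl3 : 3 * ((d:ℝ)^2 * ((d:ℝ)+2)^((4:ℝ)/3)) / ε₁^((2:ℝ)/3) ≤ Real.log n :=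
      le_trans (le_trans (le_max_left _ _) (le_max_right _ _)) hLn
    have hl4 : 3 * ((d:ℝ)^2 * (1 + ((d:ℝ)+2)^((1:ℝ)/3))^2) /
        (ε₁^((2:ℝ)/3) * ((d:ℝ)+2)^(-(4:ℝ)/3)) ≤ Real.log n :=
      le_trans (le_trans (le_max_right _ _) (le_max_right _ _)) hLn
    have hlp : (0:ℝ) < Real.log n := by linarith
    have hn0 : (0:ℝ) < n := by
      rcases Nat.eq_zero_or_pos n with h | h
      · subst h; simp at hlp
      · exact_mod_cast h
    -- choice of ε
    have hεIcc : ε₁ * Real.log n ∈ Set.Icc 0 (lam * Real.log n) := by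
      constructor
      · positivity
      · apply mul_le_mul_of_nonneg_right _ hlp.le
        rw [hε₁def]; linarith
    have hG := Gfun_le d (k n) hεIcc
    have hsub : lam * Real.log n - ε₁ * Real.log n = μ * Real.log n := by
      rw [hε₁def, hμdef]; ring
    rw [hsub] at hG
    have htail : chiSqTail d (μ * Real.log n) ≤ C * Real.exp (-(c * (μ * Real.log n))) := by
      apply hCtail
      nlinarith
    have hH := Hfun_exp_le d hd (k n) hε₁ hl1 hlε hl4 hkn
    have hR := Rfun_exp_le d hd (k n) hε₁ hl1 hl3 hkn
    have step1 : (n:ℝ) * Gfun d (k n) (lam * Real.log n)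
        ≤ (n:ℝ) * ((2 * Real.exp 3 / 9) * (C * Real.exp (-(c * μ * Real.log n))) +
            ((d:ℝ)^2 + d) * Real.exp (-(3 * Real.log n)) +
            2 * d * Real.exp (-(3 * Real.log n))) := by
      apply mul_le_mul_of_nonneg_left _ (Nat.cast_nonneg n)
      refine hG.trans ?_
      rw [show c * μ * Real.log n = c * (μ * Real.log n) by ring]
      gcongr
    refine step1.trans (le_of_eq ?_)
    have e1 : (n:ℝ) * Real.exp (-(c * μ * Real.log n)) = (n:ℝ) ^ (1 - c*μ) :=
      mul_exp_neg_log _ hn0 _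
    have e2 : (n:ℝ) * Real.exp (-(3 * Real.log n)) = (n:ℝ) ^ (1 - (3:ℝ)) :=
      mul_exp_neg_log _ hn0 _
    calc (n:ℝ) * ((2 * Real.exp 3 / 9) * (C * Real.exp (-(c * μ * Real.log n))) +
            ((d:ℝ)^2 + d) * Real.exp (-(3 * Real.log n)) +
            2 * d * Real.exp (-(3 * Real.log n)))
        = (2 * Real.exp 3 / 9 * C) * ((n:ℝ) * Real.exp (-(c * μ * Real.log n))) +
          ((d:ℝ)^2 + 3*d) * ((n:ℝ) * Real.exp (-(3 * Real.log n))) := by ring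
      _ = (2 * Real.exp 3 / 9 * C) * (n:ℝ)^(1 - c*μ) +
          ((d:ℝ)^2 + 3*d) * (n:ℝ)^(1 - (3:ℝ)) := by rw [e1, e2]
  -- summability
  have hBnd : Summable (fun n : ℕ => (2 * Real.exp 3 / 9 * C) * (n:ℝ)^(1 - c*μ) +
      ((d:ℝ)^2 + 3*d) * (n:ℝ)^(1 - (3:ℝ))) := by
    apply Summable.add
    · exact (Real.summable_nat_rpow.mpr (by linarith)).mul_left _
    · exact (Real.summable_nat_rpow.mpr (by norm_num)).mul_left _
  apply summable_of_isBigO_nat hBnd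
  rw [Asymptotics.isBigO_iff]
  refine ⟨1, ?_⟩
  filter_upwards [hbound] with n hn
  have hGnn : 0 ≤ (n:ℝ) * Gfun d (k n) (lam * Real.log n) := by
    apply mul_nonneg (Nat.cast_nonneg n)
    apply Gfun_nonneg
    have := Real.log_natCast_nonneg n
    positivity
  rw [Real.norm_eq_abs, Real.norm_eq_abs, abs_of_nonneg hGnn, one_mul]
  exact hn.trans (le_abs_self _)
end
end

section
/- Let X_1,…,X_n be i.i.d. from a distribution on a compact d'-dimensional C² manifold M ⊂ ℝ^d with C² boundary ∂M ≠ ∅, with density f satisfying 0 < f₀ ≤ f. Then there exists a constant c > 0 such that, almost surely, for all n large enough there exists a sample point X_i with dist(X_i, ∂M) ≤ c·ln(n)/n. -/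
open MeasureTheory Metric Set Filter
open scoped ENNReal NNReal Topology RealInnerProductSpace

noncomputable section

/-- Euclidean space `ℝ^d`. -/
abbrev Euc (d : ℕ) := EuclideanSpace ℝ (Fin d)

/-- A compact `d'`-dimensional `C²` embedded submanifold with `C²` boundary in `ℝ^d`,
encoded via local `C²` parametrizations defined on (open subsets of) the half-space
`Euc (d'-1) × [0,∞)`, which are immersions and homeomorphisms onto relatively open
subsets of the carrier, the boundary corresponding to the face `Euc (d'-1) × {0}`. -/
structure C2SubmanifoldB (d d' : ℕ) where
  carrier : Set (Euc d)
  bdry : Set (Euc d)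
  bdry_subset : bdry ⊆ carrier
  isCompact : IsCompact carrier
  bdry_isCompact : IsCompact bdry
  nonempty : carrier.Nonempty
  chart : Euc d → (Euc (d' - 1) × ℝ) → Euc d
  chartDom : Euc d → Set (Euc (d' - 1) × ℝ)
  chartNbhd : Euc d → Set (Euc d)
  dom_open : ∀ x ∈ carrier, IsOpen (chartDom x)
  chart_smooth : ∀ x ∈ carrier, ContDiff ℝ 2 (chart x)
  chart_injOn : ∀ x ∈ carrier, Set.InjOn (chart x) (chartDom x)
  nbhd_open : ∀ x ∈ carrier, IsOpen (chartNbhd x)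
  nbhd_mem : ∀ x ∈ carrier, x ∈ chartNbhd x
  chart_mem : ∀ x ∈ carrier, ∃ y ∈ chartDom x, 0 ≤ y.2 ∧ chart x y = x
  chart_image : ∀ x ∈ carrier,
    chart x '' (chartDom x ∩ {y | 0 ≤ y.2}) = carrier ∩ chartNbhd x
  chart_image_bdry : ∀ x ∈ carrier,
    chart x '' (chartDom x ∩ {y | y.2 = 0}) = bdry ∩ chartNbhd x
  chart_center_bdry : ∀ x ∈ bdry, (0 : Euc (d' - 1) × ℝ) ∈ chartDom x ∧ chart x 0 = x
  chart_immersion : ∀ x ∈ carrier, ∀ u ∈ chartDom x,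
    Function.Injective (fderiv ℝ (chart x) u)

namespace C2SubmanifoldB

variable {d d' : ℕ}

/-- The tangent space of `M` at a boundary point `x`. -/
def tangent (M : C2SubmanifoldB d d') (x : Euc d) : Submodule ℝ (Euc d) :=
  LinearMap.range ((fderiv ℝ (M.chart x) 0) : (Euc (d' - 1) × ℝ) →ₗ[ℝ] Euc d)

/-- The tangent space of `∂M` at a boundary point `x`. -/
def bdryTangent (M : C2SubmanifoldB d d') (x : Euc d) : Submodule ℝ (Euc d) :=
  Submodule.map ((fderiv ℝ (M.chart x) 0) : (Euc (d' - 1) × ℝ) →ₗ[ℝ] Euc d)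
    (LinearMap.ker (LinearMap.snd ℝ (Euc (d' - 1)) ℝ))

/-- Orthogonal projection of `ℝ^d` onto the affine tangent plane `x + T_x M`. -/
def proj (M : C2SubmanifoldB d d') (x z : Euc d) : Euc d :=
  x + ((M.tangent x).orthogonalProjectionOnto (z - x) : Euc d)

end C2SubmanifoldB

lemma collar_measure_lb {d d' : ℕ} (hd'1 : 1 ≤ d')
    (M : C2SubmanifoldB d d') (hbdry : M.bdry.Nonempty) :
    ∃ r₀ > (0:ℝ), ∃ κ > (0:ℝ), ∀ r : ℝ, 0 < r → r ≤ r₀ →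
      ENNReal.ofReal (κ * r) ≤
        μH[(d' : ℝ)] (M.carrier ∩ {z | Metric.infDist z M.bdry ≤ r}) := by
  classical
  obtain ⟨x₀, hx₀⟩ := hbdry
  have hx₀c : x₀ ∈ M.carrier := M.bdry_subset hx₀
  set E := (Euc (d' - 1) × ℝ)
  set φ := M.chart x₀ with hφdef
  obtain ⟨h0dom, h0eq⟩ := M.chart_center_bdry x₀ hx₀
  set A := fderiv ℝ φ 0 with hA
  have hAinj : Function.Injective A := M.chart_immersion x₀ hx₀c 0 h0dom
  obtain ⟨B, hB⟩ := LinearMap.exists_leftInverse_of_injective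
    (A : E →ₗ[ℝ] Euc d) (LinearMap.ker_eq_bot.mpr hAinj)
  set Bc : Euc d →L[ℝ] E := LinearMap.toContinuousLinearMap B with hBc
  have hφc : ContDiff ℝ 2 φ := M.chart_smooth x₀ hx₀c
  have hφd : HasStrictFDerivAt φ A 0 :=
    (hφc.contDiffAt).hasStrictFDerivAt (by norm_num)
  have hgd : HasStrictFDerivAt (Bc ∘ φ) (Bc.comp A) 0 :=
    Bc.hasStrictFDerivAt.comp 0 hφd
  have hcompid : Bc.comp A =
      ((ContinuousLinearEquiv.refl ℝ E : E ≃L[ℝ] E) : E →L[ℝ] E) := by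
    refine ContinuousLinearMap.ext fun y => ?_
    have := LinearMap.congr_fun hB y
    exact this
  rw [hcompid] at hgd
  obtain ⟨s, hs_nhds, hs_approx⟩ :=
    hgd.approximates_deriv_on_nhds (Or.inr (by norm_num : (0:ℝ≥0) < 2⁻¹))
  have hNval : ‖(((ContinuousLinearEquiv.refl ℝ E).symm :
      E ≃L[ℝ] E) : E →L[ℝ] E)‖₊ = 1 := by
    simp [ContinuousLinearMap.nnnorm_id]
  have hanti := hs_approx.antilipschitz (f' := ContinuousLinearEquiv.refl ℝ E)
    (Or.inr (by rw [hNval, inv_one]; exact_mod_cast (by norm_num : (2:ℝ)⁻¹ < 1)))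
  set K₁ : ℝ≥0 := (‖(((ContinuousLinearEquiv.refl ℝ E).symm :
      E ≃L[ℝ] E) : E →L[ℝ] E)‖₊⁻¹ - 2⁻¹)⁻¹ with hK₁
  set K' : ℝ≥0 := K₁ * ‖Bc‖₊ + 1 with hK'
  have hK'1 : (1:ℝ≥0) ≤ K' := le_add_self
  -- antilipschitz inequality for φ on s
  have hanti' : ∀ y ∈ s, ∀ y' ∈ s,
      edist y y' ≤ (K' : ℝ≥0∞) * edist (φ y) (φ y') := by
    intro y hy y' hy'
    have h1 : edist y y' ≤ (K₁ : ℝ≥0∞) * edist ((Bc ∘ φ) y) ((Bc ∘ φ) y') :=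
      hanti ⟨y, hy⟩ ⟨y', hy'⟩
    have h2 : edist ((Bc ∘ φ) y) ((Bc ∘ φ) y') ≤ ‖Bc‖₊ * edist (φ y) (φ y') :=
      Bc.lipschitz.edist_le_mul _ _
    calc edist y y' ≤ (K₁ : ℝ≥0∞) * (‖Bc‖₊ * edist (φ y) (φ y')) :=
          le_trans h1 (mul_le_mul_right h2 _)
      _ = ((K₁ * ‖Bc‖₊ : ℝ≥0) : ℝ≥0∞) * edist (φ y) (φ y') := by
          push_cast; ring
      _ ≤ (K' : ℝ≥0∞) * edist (φ y) (φ y') :=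
          mul_le_mul_left (by exact_mod_cast (self_le_add_right _ _ : K₁ * ‖Bc‖₊ ≤ K')) _
  -- Lipschitz bound for φ near 0
  obtain ⟨L, t, ht_nhds, hLip⟩ :=
    (hφc.contDiffAt.of_le (by norm_num)).exists_lipschitzOnWith
  -- choose a ball inside everything
  have hmem : s ∩ t ∩ M.chartDom x₀ ∈ 𝓝 (0 : E) :=
    Filter.inter_mem (Filter.inter_mem hs_nhds ht_nhds)
      ((M.dom_open x₀ hx₀c).mem_nhds h0dom)
  obtain ⟨ρ, hρpos, hρball⟩ := Metric.mem_nhds_iff.mp hmem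
  set ρ₂ : ℝ := ρ / 2 with hρ₂
  have hρ₂pos : 0 < ρ₂ := by positivity
  have hρ₂lt : ρ₂ < ρ := by simp [hρ₂]; linarith
  -- the family of boxes
  set S : ℝ → Set E := fun r => (ball (0 : Euc (d' - 1)) ρ₂) ×ˢ (Ioc (0:ℝ) r)
    with hS
  have hSball : ∀ r : ℝ, r ≤ ρ₂ → S r ⊆ ball (0 : E) ρ := by
    intro r hr u hu
    obtain ⟨hu1, hu2⟩ := hu
    have h1 : dist u.1 (0 : Euc (d' - 1)) < ρ := lt_trans (mem_ball.mp hu1) hρ₂lt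
    have h2 : dist u.2 (0:ℝ) < ρ := by
      rw [Real.dist_eq, sub_zero, abs_of_pos hu2.1]
      exact lt_of_le_of_lt (le_trans hu2.2 hr) hρ₂lt
    rw [mem_ball, Prod.dist_eq]
    exact max_lt h1 h2
  -- Hausdorff measure on E is a Haar measure
  have hfrE : Module.finrank ℝ E = d' := by
    have : Module.finrank ℝ E = (d' - 1) + 1 := by
      simp [E, Module.finrank_prod, finrank_euclideanSpace_fin]
    omega
  haveI hHaarE : (μH[(d' : ℝ)] : Measure E).IsAddHaarMeasure := by
    have h : ((d' : ℝ)) = ((Module.finrank ℝ E : ℕ) : ℝ) := by rw [hfrE]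
    rw [h]; infer_instance
  haveI hHaar1 : (μH[((d' - 1 : ℕ) : ℝ)] : Measure (Euc (d' - 1))).IsAddHaarMeasure := by
    have h : (((d' - 1 : ℕ)) : ℝ) = ((Module.finrank ℝ (Euc (d' - 1)) : ℕ) : ℝ) := by
      rw [finrank_euclideanSpace_fin]
    rw [h]; infer_instance
  set μ1 : Measure (Euc (d' - 1)) := μH[((d' - 1 : ℕ) : ℝ)] with hμ1
  set μp : Measure E := μ1.prod (volume : Measure ℝ) with hμp
  haveI : μp.IsAddHaarMeasure := by infer_instance
  have h_eq : (μH[(d' : ℝ)] : Measure E) =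
      (Measure.addHaarScalarFactor (μH[(d' : ℝ)] : Measure E) μp) • μp :=
    Measure.isAddLeftInvariant_eq_smul _ _
  set c₀ : ℝ≥0 := Measure.addHaarScalarFactor (μH[(d' : ℝ)] : Measure E) μp with hc₀
  have hc₀pos : 0 < c₀ :=
    Measure.addHaarScalarFactor_pos_of_isAddHaarMeasure _ _
  set m₀ : ℝ≥0∞ := μ1 (ball (0 : Euc (d' - 1)) ρ₂) with hm₀
  have hm₀pos : 0 < m₀ := isOpen_ball.measure_pos μ1 ⟨0, mem_ball_self hρ₂pos⟩
  have hm₀fin : m₀ < ⊤ := measure_ball_lt_top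
  have hSmeas : ∀ r : ℝ, 0 < r →
      μH[(d' : ℝ)] (S r) = (c₀ : ℝ≥0∞) * (m₀ * ENNReal.ofReal r) := by
    intro r hr
    rw [h_eq]
    simp only [Measure.smul_apply, smul_eq_mul, hS]
    rw [hμp, Measure.prod_prod, Real.volume_Ioc]
    simp only [sub_zero, hm₀, ENNReal.smul_def, smul_eq_mul]
  -- the image of the box is in the collar
  have himg : ∀ r : ℝ, 0 < r → r ≤ ρ₂ →
      φ '' S r ⊆ M.carrier ∩ {z | Metric.infDist z M.bdry ≤ (L : ℝ) * r} := by
    intro r hr hrρ z hz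
    obtain ⟨u, hu, rfl⟩ := hz
    have huball : u ∈ ball (0 : E) ρ := hSball r hrρ hu
    have hudom : u ∈ M.chartDom x₀ := (hρball huball).2
    have hut : u ∈ t := (hρball huball).1.2
    obtain ⟨hu1, hu2⟩ := hu
    have hu2' : (0:ℝ) < u.2 := hu2.1
    -- u maps into the carrier
    have hcar : φ u ∈ M.carrier := by
      have := M.chart_image x₀ hx₀c
      have hmem : φ u ∈ φ '' (M.chartDom x₀ ∩ {y | 0 ≤ y.2}) :=
        ⟨u, ⟨hudom, le_of_lt hu2'⟩, rfl⟩
      rw [this] at hmem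
      exact hmem.1
    refine ⟨hcar, ?_⟩
    -- the foot point (u.1, 0)
    set w : E := (u.1, 0) with hw
    have hwball : w ∈ ball (0 : E) ρ := by
      rw [mem_ball, Prod.dist_eq]
      refine max_lt (lt_trans (mem_ball.mp hu1) hρ₂lt) ?_
      simpa [hw] using hρpos
    have hwdom : w ∈ M.chartDom x₀ := (hρball hwball).2
    have hwt : w ∈ t := (hρball hwball).1.2
    have hwbdry : φ w ∈ M.bdry := by
      have hmem : φ w ∈ φ '' (M.chartDom x₀ ∩ {y | y.2 = 0}) :=
        ⟨w, ⟨hwdom, rfl⟩, rfl⟩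
      rw [M.chart_image_bdry x₀ hx₀c] at hmem
      exact hmem.1
    have hd1 : Metric.infDist (φ u) M.bdry ≤ dist (φ u) (φ w) :=
      Metric.infDist_le_dist_of_mem hwbdry
    have hd2 : dist (φ u) (φ w) ≤ (L : ℝ) * dist u w :=
      hLip.dist_le_mul u hut w hwt
    have hd3 : dist u w = u.2 := by
      rw [Prod.dist_eq, hw]
      simp [Real.dist_eq, abs_of_pos hu2', le_of_lt hu2']
    have : Metric.infDist (φ u) M.bdry ≤ (L : ℝ) * u.2 := by
      rw [← hd3]; exact le_trans hd1 hd2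
    refine le_trans this ?_
    have hL0 : (0:ℝ) ≤ (L:ℝ) := L.coe_nonneg
    exact mul_le_mul_of_nonneg_left hu2.2 hL0
  -- measure comparison: μH (S r) ≤ K'^d' * μH (φ '' S r)
  have hd'0 : (0:ℝ) ≤ (d' : ℝ) := Nat.cast_nonneg _
  have hKpow_ne_zero : ((K' : ℝ≥0∞) ^ (d' : ℝ)) ≠ 0 := by
    apply ne_of_gt
    apply ENNReal.rpow_pos
    · exact_mod_cast lt_of_lt_of_le zero_lt_one hK'1
    · exact ENNReal.coe_ne_top
  have hKpow_ne_top : ((K' : ℝ≥0∞) ^ (d' : ℝ)) ≠ ⊤ :=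
    (ENNReal.rpow_lt_top_of_nonneg hd'0 ENNReal.coe_ne_top).ne
  have hcomp : ∀ r : ℝ, 0 < r → r ≤ ρ₂ →
      μH[(d' : ℝ)] (S r) ≤ (K' : ℝ≥0∞) ^ (d' : ℝ) * μH[(d' : ℝ)] (φ '' S r) := by
    intro r hr hrρ
    set ψ : Euc d → E := Function.invFunOn φ (ball (0 : E) ρ) with hψ
    have hballs : S r ⊆ ball (0 : E) ρ := hSball r hrρ
    have hψmem : ∀ z ∈ φ '' S r, ψ z ∈ ball (0 : E) ρ ∧ φ (ψ z) = z := by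
      intro z hz
      obtain ⟨u, hu, rfl⟩ := hz
      exact ⟨Function.invFunOn_mem ⟨u, hballs hu, rfl⟩,
        Function.invFunOn_eq ⟨u, hballs hu, rfl⟩⟩
    have hψlip : LipschitzOnWith K' ψ (φ '' S r) := by
      intro a ha b hb
      obtain ⟨haball, haeq⟩ := hψmem a ha
      obtain ⟨hbball, hbeq⟩ := hψmem b hb
      have := hanti' (ψ a) (hρball haball).1.1 (ψ b) (hρball hbball).1.1
      rw [haeq, hbeq] at this
      exact this
    have hsub2 : S r ⊆ ψ '' (φ '' S r) := by
      intro u hu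
      have h1 : φ u ∈ φ '' S r := ⟨u, hu, rfl⟩
      obtain ⟨hball2, heq2⟩ := hψmem _ h1
      have : ψ (φ u) = u := by
        have h3 := hanti' (ψ (φ u)) (hρball hball2).1.1 u (hρball (hballs hu)).1.1
        rw [heq2] at h3
        simpa using h3
      exact ⟨φ u, h1, this⟩
    calc μH[(d' : ℝ)] (S r) ≤ μH[(d' : ℝ)] (ψ '' (φ '' S r)) := measure_mono hsub2
      _ ≤ (K' : ℝ≥0∞) ^ (d' : ℝ) * μH[(d' : ℝ)] (φ '' S r) :=
          hψlip.hausdorffMeasure_image_le hd'0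
  -- assemble
  set Kpow : ℝ≥0∞ := (K' : ℝ≥0∞) ^ (d' : ℝ) with hKpow
  set D : ℝ≥0∞ := Kpow⁻¹ * ((c₀ : ℝ≥0∞) * m₀) with hD
  have hDpos : 0 < D := by
    apply ENNReal.mul_pos
    · exact (ENNReal.inv_ne_zero.mpr hKpow_ne_top)
    · apply ne_of_gt
      apply ENNReal.mul_pos
      · exact_mod_cast hc₀pos.ne'
      · exact hm₀pos.ne'
  have hDfin : D ≠ ⊤ := by
    apply ENNReal.mul_ne_top
    · simp [ENNReal.inv_ne_top, hKpow_ne_zero]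
    · exact ENNReal.mul_ne_top ENNReal.coe_ne_top hm₀fin.ne
  set Lr : ℝ := (L : ℝ) + 1 with hLr
  have hLrpos : 0 < Lr := by positivity
  refine ⟨ρ₂ * Lr, by positivity, D.toReal / Lr, by
    apply div_pos _ hLrpos
    exact ENNReal.toReal_pos hDpos.ne' hDfin, ?_⟩
  intro rq hrq hrq₀
  set r : ℝ := rq / Lr with hr
  have hrpos : 0 < r := div_pos hrq hLrpos
  have hrρ₂ : r ≤ ρ₂ := by
    rw [hr, div_le_iff₀ hLrpos]
    linarith [hrq₀]
  have hLrrq : r * Lr = rq := by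
    rw [hr]; exact div_mul_cancel₀ rq hLrpos.ne'
  have hLrr : (L : ℝ) * r ≤ rq := by
    calc (L : ℝ) * r ≤ Lr * r :=
          mul_le_mul_of_nonneg_right (by simp [hLr]) hrpos.le
      _ = rq := by rw [mul_comm]; exact hLrrq
  -- inclusion into the collar at radius rq
  have hsub : φ '' S r ⊆ M.carrier ∩ {z | Metric.infDist z M.bdry ≤ rq} := by
    intro z hz
    obtain ⟨hz1, hz2⟩ := himg r hrpos hrρ₂ hz
    exact ⟨hz1, le_trans hz2 hLrr⟩
  have h1 : Kpow⁻¹ * μH[(d' : ℝ)] (S r) ≤ μH[(d' : ℝ)] (φ '' S r) := by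
    have h2 := mul_le_mul_right (hcomp r hrpos hrρ₂) (Kpow⁻¹)
    rwa [← mul_assoc, ENNReal.inv_mul_cancel hKpow_ne_zero hKpow_ne_top,
      one_mul] at h2
  have h3 : D * ENNReal.ofReal r ≤
      μH[(d' : ℝ)] (M.carrier ∩ {z | Metric.infDist z M.bdry ≤ rq}) := by
    refine le_trans ?_ (le_trans h1 (measure_mono hsub))
    rw [hSmeas r hrpos, hD]
    ring_nf
    exact le_refl _
  refine le_trans ?_ h3
  have hκrq : D.toReal / Lr * rq = D.toReal * r := by
    rw [hr]; ring
  rw [hκrq, ENNReal.ofReal_mul (ENNReal.toReal_nonneg), ENNReal.ofReal_toReal hDfin]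

lemma nu_collar_lb {d d' : ℕ} (hd'1 : 1 ≤ d') (M : C2SubmanifoldB d d')
    (hbdry : M.bdry.Nonempty)
    (f : Euc d → ℝ) (f₀ : ℝ) (hf₀ : 0 < f₀) (hlow : ∀ x ∈ M.carrier, f₀ ≤ f x)
    (ν : Measure (Euc d))
    (hν : ν = ((μH[(d' : ℝ)]).restrict M.carrier).withDensity
      fun x => ENNReal.ofReal (f x)) :
    ∃ r₀ > (0:ℝ), ∃ κ > (0:ℝ), ∀ r : ℝ, 0 < r → r ≤ r₀ →
      ENNReal.ofReal (κ * r) ≤ ν {z | Metric.infDist z M.bdry ≤ r} := by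
  obtain ⟨r₀, hr₀, κ', hκ', hcol⟩ := collar_measure_lb hd'1 M hbdry
  refine ⟨r₀, hr₀, f₀ * κ', by positivity, ?_⟩
  intro r hr hrr
  have hCmeas : MeasurableSet {z : Euc d | Metric.infDist z M.bdry ≤ r} :=
    (isClosed_le (continuous_infDist_pt _) continuous_const).measurableSet
  have hcar_meas : MeasurableSet M.carrier := M.isCompact.isClosed.measurableSet
  rw [hν, withDensity_apply _ hCmeas]
  set μr := (μH[(d' : ℝ)].restrict M.carrier).restrict
    {z | Metric.infDist z M.bdry ≤ r} with hμr
  have hae : ∀ᵐ z ∂μr, ENNReal.ofReal f₀ ≤ ENNReal.ofReal (f z) := by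
    have h2 : ∀ᵐ z ∂(μH[(d' : ℝ)].restrict M.carrier), z ∈ M.carrier :=
      ae_restrict_mem hcar_meas
    have h3 : ∀ᵐ z ∂μr, z ∈ M.carrier :=
      Filter.Eventually.filter_mono (ae_mono Measure.restrict_le_self) h2
    filter_upwards [h3] with z hz
    exact ENNReal.ofReal_le_ofReal (hlow z hz)
  have h4 : ENNReal.ofReal f₀ * μr univ ≤ ∫⁻ z, ENNReal.ofReal (f z) ∂μr := by
    calc ENNReal.ofReal f₀ * μr univ
        = ∫⁻ _, ENNReal.ofReal f₀ ∂μr := by rw [lintegral_const, mul_comm]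
      _ ≤ _ := lintegral_mono_ae hae
  have h5 : μr univ =
      μH[(d' : ℝ)] (M.carrier ∩ {z | Metric.infDist z M.bdry ≤ r}) := by
    rw [hμr, Measure.restrict_apply_univ, Measure.restrict_apply hCmeas, inter_comm]
  calc ENNReal.ofReal (f₀ * κ' * r)
      = ENNReal.ofReal f₀ * ENNReal.ofReal (κ' * r) := by
        rw [← ENNReal.ofReal_mul hf₀.le]; ring_nf
    _ ≤ ENNReal.ofReal f₀ * μr univ := by
        rw [h5]
        exact mul_le_mul_right (hcol r hr hrr) _
    _ ≤ ∫⁻ z, ENNReal.ofReal (f z) ∂μr := h4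


/-- For an i.i.d. sample on a compact `C²` manifold with nonempty `C²` boundary and density
`f ≥ f₀ > 0`, there is `c > 0` such that almost surely, for all large `n`, some sample point
among the first `n` is within distance `c ln(n)/n` of the boundary. -/
theorem exists_sample_point_near_boundary {d d' : ℕ} (hd'1 : 1 ≤ d') (hd' : d' ≤ d)
    (M : C2SubmanifoldB d d') (hbdry : M.bdry.Nonempty)
    (f : Euc d → ℝ) (f₀ : ℝ) (hf₀ : 0 < f₀)
    (hlow : ∀ x ∈ M.carrier, f₀ ≤ f x)
    (ν : Measure (Euc d))
    (hν : ν = ((μH[(d' : ℝ)]).restrict M.carrier).withDensity fun x => ENNReal.ofReal (f x))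
    (hprob : IsProbabilityMeasure ν)
    {Ω : Type*} [MeasurableSpace Ω] (P : Measure Ω) [IsProbabilityMeasure P]
    (X : ℕ → Ω → Euc d) (hmeas : ∀ i, Measurable (X i))
    (hindep : ProbabilityTheory.iIndepFun X P)
    (hlaw : ∀ i, Measure.map (X i) P = ν) :
    ∃ c > 0, ∀ᵐ ω ∂P, ∀ᶠ n : ℕ in atTop,
      ∃ i < n, Metric.infDist (X i ω) M.bdry ≤ c * Real.log n / n := by
  classical
  obtain ⟨r₀, hr₀, κ, hκ, hcol⟩ := nu_collar_lb hd'1 M hbdry f f₀ hf₀ hlow ν hν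
  set c : ℝ := 2 / κ with hc
  have hcpos : 0 < c := by positivity
  refine ⟨c, hcpos, ?_⟩
  -- the bad events
  set A : ℕ → Set Ω := fun n =>
    {ω | ¬ ∃ i, i < n ∧ Metric.infDist (X i ω) M.bdry ≤ c * Real.log n / n} with hA
  -- choose N such that the quantitative bound holds for n ≥ N
  have htend : Tendsto (fun n : ℕ => Real.log n / n) atTop (𝓝 0) :=
    (Real.isLittleO_log_id_atTop.tendsto_div_nhds_zero).comp
      tendsto_natCast_atTop_atTop
  have hev : ∀ᶠ n : ℕ in atTop,
      Real.log n / n < min (r₀ / c) (1/2) ∧ 2 ≤ n := by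
    have h1 : ∀ᶠ n : ℕ in atTop, Real.log n / n < min (r₀ / c) (1/2) := by
      have hmin : (0:ℝ) < min (r₀ / c) (1/2) := by
        apply lt_min (by positivity) (by norm_num)
      exact htend.eventually (eventually_lt_nhds hmin)
    filter_upwards [h1, eventually_ge_atTop 2] with n h1 h2 using ⟨h1, h2⟩
  obtain ⟨N, hN⟩ := eventually_atTop.mp hev
  -- the key estimate
  have hkey : ∀ n : ℕ, N ≤ n → P (A n) ≤ ENNReal.ofReal ((n:ℝ) ^ (-2 : ℝ)) := by
    intro n hn
    obtain ⟨hsmall, hn2⟩ := hN n hn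
    have hn1 : (1:ℝ) < (n:ℝ) := by exact_mod_cast hn2
    have hn0 : (0:ℝ) < (n:ℝ) := by linarith
    have hlogpos : 0 < Real.log n := Real.log_pos hn1
    set rn : ℝ := c * Real.log n / n with hrn
    have hrnpos : 0 < rn := by positivity
    have hrn_eq : rn = c * (Real.log n / n) := by rw [hrn]; ring
    have hrnle : rn ≤ r₀ := by
      rw [hrn_eq]
      calc c * (Real.log n / n) ≤ c * (r₀ / c) := by
            apply mul_le_mul_of_nonneg_left _ hcpos.le
            exact le_of_lt (lt_of_lt_of_le hsmall (min_le_left _ _))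
        _ = r₀ := by field_simp
    set q : ℝ := 2 * (Real.log n / n) with hq
    have hqpos : 0 < q := by positivity
    have hq1 : q ≤ 1 := by
      have := lt_of_lt_of_le hsmall (min_le_right _ _)
      rw [hq]; linarith
    have hκrn : κ * rn = q := by
      rw [hrn, hq, hc]; field_simp
    have hν_lb : ENNReal.ofReal q ≤ ν {z | Metric.infDist z M.bdry ≤ rn} := by
      rw [← hκrn]; exact hcol rn hrnpos hrnle
    have hCmeas : MeasurableSet {z : Euc d | Metric.infDist z M.bdry ≤ rn} :=
      (isClosed_le (continuous_infDist_pt _) continuous_const).measurableSet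
    -- probability of the bad event
    have hAeq : A n = ⋂ i ∈ Finset.range n,
        X i ⁻¹' {z : Euc d | Metric.infDist z M.bdry ≤ rn}ᶜ := by
      ext ω
      simp [hA, hrn, Finset.mem_range, not_exists, not_and]
    have hPA : P (A n) = (1 - ν {z | Metric.infDist z M.bdry ≤ rn}) ^ n := by
      rw [hAeq, hindep.meas_biInter (fun i _ => ⟨_, hCmeas.compl, rfl⟩)]
      have hterm : ∀ i, P (X i ⁻¹' {z : Euc d | Metric.infDist z M.bdry ≤ rn}ᶜ)
          = 1 - ν {z | Metric.infDist z M.bdry ≤ rn} := by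
        intro i
        rw [← Measure.map_apply (hmeas i) hCmeas.compl, hlaw i,
          prob_compl_eq_one_sub hCmeas]
      simp only [hterm, Finset.prod_const, Finset.card_range]
    -- bound it
    have hstep1 : 1 - ν {z | Metric.infDist z M.bdry ≤ rn} ≤ ENNReal.ofReal (1 - q) := by
      have : ENNReal.ofReal (1 - q) = 1 - ENNReal.ofReal q := by
        rw [ENNReal.ofReal_sub _ hqpos.le, ENNReal.ofReal_one]
      rw [this]
      exact tsub_le_tsub_left hν_lb 1
    have hstep2 : P (A n) ≤ ENNReal.ofReal ((1 - q) ^ n) := by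
      rw [hPA, ENNReal.ofReal_pow (by linarith)]
      exact pow_le_pow_left' hstep1 n
    refine le_trans hstep2 (ENNReal.ofReal_le_ofReal ?_)
    have h1q : 1 - q ≤ Real.exp (-q) := by
      have := Real.add_one_le_exp (-q)
      linarith
    calc (1 - q) ^ n ≤ Real.exp (-q) ^ n :=
          pow_le_pow_left₀ (by linarith) h1q n
      _ = Real.exp ((n:ℝ) * (-q)) := (Real.exp_nat_mul _ n).symm
      _ = (n:ℝ) ^ (-2 : ℝ) := by
          rw [Real.rpow_def_of_pos hn0]
          congr 1
          rw [hq]; field_simp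
  -- Borel–Cantelli
  have hsum : Summable (fun k : ℕ => ((k + N : ℕ) : ℝ) ^ (-2 : ℝ)) := by
    have h := Real.summable_nat_rpow.mpr (by norm_num : (-2:ℝ) < -1)
    exact (summable_nat_add_iff N).mpr h
  have htsum : (∑' k : ℕ, P (A (k + N))) ≠ ⊤ := by
    have hle : (∑' k : ℕ, P (A (k + N))) ≤
        ∑' k : ℕ, ENNReal.ofReal (((k + N : ℕ) : ℝ) ^ (-2 : ℝ)) := by
      apply ENNReal.tsum_le_tsum
      intro k
      exact hkey (k + N) (Nat.le_add_left _ _)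
    have heq : (∑' k : ℕ, ENNReal.ofReal (((k + N : ℕ) : ℝ) ^ (-2 : ℝ)))
        = ENNReal.ofReal (∑' k : ℕ, ((k + N : ℕ) : ℝ) ^ (-2 : ℝ)) := by
      rw [ENNReal.ofReal_tsum_of_nonneg (fun k => Real.rpow_nonneg (Nat.cast_nonneg _) _) hsum]
    exact ne_top_of_le_ne_top (by rw [heq]; exact ENNReal.ofReal_ne_top) hle
  have hae := MeasureTheory.ae_eventually_notMem (μ := P) htsum
  filter_upwards [hae] with ω hω
  obtain ⟨k₀, hk₀⟩ := eventually_atTop.mp hω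
  rw [eventually_atTop]
  refine ⟨k₀ + N, fun n hn => ?_⟩
  have h1 : ω ∉ A ((n - N) + N) := hk₀ (n - N) (by omega)
  rw [show n - N + N = n by omega] at h1
  have h2 : ¬ ¬ ∃ i, i < n ∧ Metric.infDist (X i ω) M.bdry ≤ c * Real.log n / n := h1
  push_neg at h2
  obtain ⟨i, hi, hle⟩ := h2
  exact ⟨i, hi, hle⟩
end
end
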